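/- arXiv:1106.3920 — 2 statements merged into one kernel-verified Lean document; each statement's English description precedes it below -/
import Mathlib

section
/- Let J_1 ⊆ 𝒜_{m_1} and J_2 ⊆ 𝒜_{m_2} be proper ideals. Then corank(J_1 ⊞ J_2) = corank(J_1) + corank(J_2), where the corank of J_1 ⊞ J_2 is computed in 𝒜_{m_1+m_2}. -/
open MvPowerSeries

/-- `𝒜 m` : formal power series in `m` variables over `ℂ`, the algebraic model for the
local ring of germs of differentiable functions at the origin of `ℂ^m`. -/
abbrev Amod (m : ℕ) : Type := MvPowerSeries (Fin m) ℂ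

/-- Formal partial derivative `∂/∂x_j` of a multivariate power series. -/
noncomputable def pd {m : ℕ} (j : Fin m) (φ : Amod m) : Amod m :=
  fun e => ((e j + 1 : ℕ) : ℂ) * MvPowerSeries.coeff (e + Finsupp.single j 1) φ

/-- The differential at the origin: the vector of degree-one coefficients. -/
noncomputable def diffAtZero {m : ℕ} (φ : Amod m) : Fin m → ℂ :=
  fun j => MvPowerSeries.coeff (Finsupp.single j 1) φ

/-- The rank of an ideal `B ⊆ 𝒜 m`: the dimension of the `ℂ`-linear span of the
differentials at `0` of the elements of `B`. -/
noncomputable def rankIdeal {m : ℕ} (B : Ideal (Amod m)) : ℕ :=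
  Module.finrank ℂ (Submodule.span ℂ (diffAtZero '' (B : Set (Amod m))))

/-- The corank of an ideal `B ⊆ 𝒜 m`. -/
noncomputable def corankIdeal {m : ℕ} (B : Ideal (Amod m)) : ℕ := m - rankIdeal B

/-- The Jacobian extension `Δ_k B` (lower index): the ideal generated by `B` together with
all `k × k` minors of Jacobian matrices of `k`-tuples of elements of `B`; for `k > m` it
is `B` itself. -/
noncomputable def jacExt {m : ℕ} (k : ℕ) (B : Ideal (Amod m)) : Ideal (Amod m) :=
  if m < k then B
  else B ⊔ Ideal.span { f | ∃ φ : Fin k → Amod m, (∀ i, φ i ∈ B) ∧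
    ∃ j : Fin k → Fin m, StrictMono j ∧
      f = Matrix.det (Matrix.of fun i l => pd (j l) (φ i)) }

/-- Jacobian extension with upper index: `Δ^i B = Δ_{m-i+1} B`. -/
noncomputable def jacExtUpper {m : ℕ} (i : ℕ) (B : Ideal (Amod m)) : Ideal (Amod m) :=
  jacExt (m - i + 1) B

/-- The iterated critical extensions `TBiter J p = Δ^{i_p} ⋯ Δ^{i_1} J`. -/
noncomputable def TBiter {m : ℕ} (J : Ideal (Amod m)) : ℕ → Ideal (Amod m)
  | 0 => J
  | p + 1 => jacExtUpper (corankIdeal (TBiter J p)) (TBiter J p)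

/-- The Thom–Boardman symbol, `0`-indexed: `TB J p` is the `(p+1)`-st entry `i_{p+1}`,
i.e. `TB J 0 = corank J` and `TB J p = corank (Δ^{i_p} ⋯ Δ^{i_1} J)`. -/
noncomputable def TB {m : ℕ} (J : Ideal (Amod m)) (p : ℕ) : ℕ :=
  corankIdeal (TBiter J p)

/-- Coefficient `a_i` of the generic monic polynomial of degree `n`
(the first block of `n` variables of `𝒜 (n+r)`), with `a_n = 1` and `a_i = 0` for `i > n`. -/
noncomputable def aCoef (n r i : ℕ) : Amod (n + r) :=
  if h : i < n then MvPowerSeries.X (Fin.castAdd r ⟨i, h⟩)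
  else if i = n then 1 else 0

/-- Coefficient `b_j` of the generic monic polynomial of degree `r`
(the last block of `r` variables of `𝒜 (n+r)`), with `b_r = 1` and `b_j = 0` for `j > r`. -/
noncomputable def bCoef (n r j : ℕ) : Amod (n + r) :=
  if h : j < r then MvPowerSeries.X (Fin.natAdd n ⟨j, h⟩)
  else if j = r then 1 else 0

/-- Coefficient `c_k` of the product `(x^n + Σ_{i<n} a_i x^i) (x^r + Σ_{j<r} b_j x^j)`. -/
noncomputable def cCoef (n r k : ℕ) : Amod (n + r) :=
  ∑ p ∈ Finset.HasAntidiagonal.antidiagonal k, aCoef n r p.1 * bCoef n r p.2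

/-- The ideal `I(μ_{n,r}) ⊆ 𝒜 (n+r)` of the polynomial multiplication map `μ_{n,r}`,
generated by `c_0, …, c_{n+r-1}`. -/
noncomputable def muIdeal (n r : ℕ) : Ideal (Amod (n + r)) :=
  Ideal.span (Set.range fun k : Fin (n + r) => cCoef n r (k : ℕ))

/-- The sequence `I(n,r)` given by the Euclidean algorithm on `n` and `r` (0-indexed):
`r` repeated `n / r` times, then `r₁ = n % r` repeated `r / r₁` times, …, followed by zeros. -/
def euclidSeq (n r p : ℕ) : ℕ :=
  if h : r = 0 then 0
  else if p < n / r then r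
  else euclidSeq r (n % r) (p - n / r)
termination_by r
decreasing_by exact Nat.mod_lt _ (Nat.pos_of_ne_zero h)

/-- The `ℂ`-algebra embedding `𝒜 m₁ → 𝒜 (m₁+m₂)` using the first `m₁` variables. -/
noncomputable def embL {m₁ m₂ : ℕ} (φ : Amod m₁) : Amod (m₁ + m₂) :=
  fun e =>
    if ∀ j : Fin m₂, e (Fin.natAdd m₁ j) = 0 then
      MvPowerSeries.coeff (Finsupp.equivFunOnFinite.symm fun i => e (Fin.castAdd m₂ i)) φ
    else 0

/-- The `ℂ`-algebra embedding `𝒜 m₂ → 𝒜 (m₁+m₂)` using the last `m₂` variables. -/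
noncomputable def embR {m₁ m₂ : ℕ} (φ : Amod m₂) : Amod (m₁ + m₂) :=
  fun e =>
    if ∀ i : Fin m₁, e (Fin.castAdd m₂ i) = 0 then
      MvPowerSeries.coeff (Finsupp.equivFunOnFinite.symm fun j => e (Fin.natAdd m₁ j)) φ
    else 0

/-- The product ideal `J₁ ⊞ J₂ ⊆ 𝒜 (m₁+m₂)`, generated by the images of `J₁` and `J₂`
under the two embeddings; it models the ideal of the Cartesian product of two map-germs. -/
noncomputable def prodIdeal {m₁ m₂ : ℕ} (J₁ : Ideal (Amod m₁)) (J₂ : Ideal (Amod m₂)) :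
    Ideal (Amod (m₁ + m₂)) :=
  Ideal.span (embL '' (J₁ : Set (Amod m₁)) ∪ embR '' (J₂ : Set (Amod m₂)))


section AuxCorank

lemma constCoeff_of_mem {m : ℕ} {J : Ideal (Amod m)} (hJ : J ≠ ⊤) {φ : Amod m}
    (hφ : φ ∈ J) : MvPowerSeries.constantCoeff φ = 0 := by
  by_contra h
  exact hJ (Ideal.eq_top_of_isUnit_mem _ hφ
    (MvPowerSeries.isUnit_iff_constantCoeff.2 (isUnit_iff_ne_zero.2 h)))

lemma diffAtZero_add {m : ℕ} (x y : Amod m) :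
    diffAtZero (x + y) = diffAtZero x + diffAtZero y := by
  funext j; simp [diffAtZero]

lemma diffAtZero_zero {m : ℕ} : diffAtZero (0 : Amod m) = 0 := by
  funext j; simp [diffAtZero]

lemma diffAtZero_mul {m : ℕ} (a x : Amod m)
    (hx : MvPowerSeries.constantCoeff x = 0) :
    diffAtZero (a * x) = MvPowerSeries.constantCoeff a • diffAtZero x := by
  classical
  funext j
  simp only [diffAtZero, Pi.smul_apply, smul_eq_mul]
  rw [MvPowerSeries.coeff_mul, Finsupp.antidiagonal_single, Finset.sum_map]
  have h1 : (Finset.HasAntidiagonal.antidiagonal (1:ℕ)) = {(0,1),(1,0)} := rfl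
  rw [h1]
  simp [Finsupp.single_zero, MvPowerSeries.coeff_zero_eq_constantCoeff, hx]

lemma diffAtZero_embL {m₁ m₂ : ℕ} (φ : Amod m₁) :
    diffAtZero (embL (m₂ := m₂) φ) = Fin.append (diffAtZero φ) 0 := by
  classical
  funext j
  refine Fin.addCases (fun j₁ => ?_) (fun j₂ => ?_) j
  · rw [Fin.append_left]
    show MvPowerSeries.coeff _ _ = _
    rw [MvPowerSeries.coeff_apply]
    show (if _ then _ else _) = _
    rw [if_pos, diffAtZero]
    · congr 1
      have : (fun i => (Finsupp.single (Fin.castAdd m₂ j₁) 1) (Fin.castAdd m₂ i))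
          = ⇑(Finsupp.single j₁ (1:ℕ)) := by
        funext i
        simp [Finsupp.single_apply, Fin.castAdd_inj]
      rw [this, Finsupp.equivFunOnFinite_symm_coe]
    · intro j'
      rw [Finsupp.single_apply, if_neg]
      intro h
      have := congrArg Fin.val h
      simp at this
      omega
  · rw [Fin.append_right]
    show MvPowerSeries.coeff _ _ = _
    rw [MvPowerSeries.coeff_apply]
    show (if _ then _ else _) = _
    rw [if_neg]
    · rfl
    · intro h
      have := h j₂
      simp at this

lemma diffAtZero_embR {m₁ m₂ : ℕ} (φ : Amod m₂) :
    diffAtZero (embR (m₁ := m₁) φ) = Fin.append (0 : Fin m₁ → ℂ) (diffAtZero φ) := by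
  classical
  funext j
  refine Fin.addCases (fun j₁ => ?_) (fun j₂ => ?_) j
  · rw [Fin.append_left]
    show MvPowerSeries.coeff _ _ = _
    rw [MvPowerSeries.coeff_apply]
    show (if _ then _ else _) = _
    rw [if_neg]
    · rfl
    · intro h
      have := h j₁
      simp at this
  · rw [Fin.append_right]
    show MvPowerSeries.coeff _ _ = _
    rw [MvPowerSeries.coeff_apply]
    show (if _ then _ else _) = _
    rw [if_pos, diffAtZero]
    · congr 1
      have : (fun i => (Finsupp.single (Fin.natAdd m₁ j₂) 1) (Fin.natAdd m₁ i))
          = ⇑(Finsupp.single j₂ (1:ℕ)) := by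
        funext i
        simp [Finsupp.single_apply, Fin.ext_iff]
      rw [this, Finsupp.equivFunOnFinite_symm_coe]
    · intro i
      rw [Finsupp.single_apply, if_neg]
      intro h
      have := congrArg Fin.val h
      simp at this
      omega

lemma constantCoeff_embL {m₁ m₂ : ℕ} (φ : Amod m₁) :
    MvPowerSeries.constantCoeff (embL (m₂ := m₂) φ) =
      MvPowerSeries.constantCoeff φ := by
  classical
  rw [← MvPowerSeries.coeff_zero_eq_constantCoeff_apply,
    ← MvPowerSeries.coeff_zero_eq_constantCoeff_apply, MvPowerSeries.coeff_apply]
  show (if _ then _ else _) = _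
  have hc : ∀ j : Fin m₂, (0 : (Fin (m₁ + m₂) →₀ ℕ)) (Fin.natAdd m₁ j) = 0 := fun _ => rfl
  rw [if_pos hc]
  have h0 : (Finsupp.equivFunOnFinite.symm
      fun i => (0 : (Fin (m₁ + m₂) →₀ ℕ)) (Fin.castAdd m₂ i)) = (0 : Fin m₁ →₀ ℕ) := by
    ext i; rfl
  rw [h0]

lemma constantCoeff_embR {m₁ m₂ : ℕ} (φ : Amod m₂) :
    MvPowerSeries.constantCoeff (embR (m₁ := m₁) φ) =
      MvPowerSeries.constantCoeff φ := by
  classical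
  rw [← MvPowerSeries.coeff_zero_eq_constantCoeff_apply,
    ← MvPowerSeries.coeff_zero_eq_constantCoeff_apply, MvPowerSeries.coeff_apply]
  show (if _ then _ else _) = _
  have hc : ∀ i : Fin m₁, (0 : (Fin (m₁ + m₂) →₀ ℕ)) (Fin.castAdd m₂ i) = 0 := fun _ => rfl
  rw [if_pos hc]
  have h0 : (Finsupp.equivFunOnFinite.symm
      fun j => (0 : (Fin (m₁ + m₂) →₀ ℕ)) (Fin.natAdd m₁ j)) = (0 : Fin m₂ →₀ ℕ) := by
    ext j; rfl
  rw [h0]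

noncomputable def padL (m₁ m₂ : ℕ) : (Fin m₁ → ℂ) →ₗ[ℂ] (Fin (m₁ + m₂) → ℂ) where
  toFun v := Fin.append v 0
  map_add' v w := by
    funext j
    refine Fin.addCases (fun i => ?_) (fun i => ?_) j <;>
      simp [Fin.append_left, Fin.append_right]
  map_smul' c v := by
    funext j
    refine Fin.addCases (fun i => ?_) (fun i => ?_) j <;>
      simp [Fin.append_left, Fin.append_right]

noncomputable def padR (m₁ m₂ : ℕ) : (Fin m₂ → ℂ) →ₗ[ℂ] (Fin (m₁ + m₂) → ℂ) where
  toFun v := Fin.append 0 v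
  map_add' v w := by
    funext j
    refine Fin.addCases (fun i => ?_) (fun i => ?_) j <;>
      simp [Fin.append_left, Fin.append_right]
  map_smul' c v := by
    funext j
    refine Fin.addCases (fun i => ?_) (fun i => ?_) j <;>
      simp [Fin.append_left, Fin.append_right]

lemma padL_inj (m₁ m₂ : ℕ) : Function.Injective (padL m₁ m₂) := by
  intro v w h
  funext i
  have := congrFun h (Fin.castAdd m₂ i)
  simpa [padL, Fin.append_left] using this

lemma padR_inj (m₁ m₂ : ℕ) : Function.Injective (padR m₁ m₂) := by
  intro v w h
  funext i
  have := congrFun h (Fin.natAdd m₁ i)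
  simpa [padR, Fin.append_right] using this

lemma pad_disjoint (m₁ m₂ : ℕ) (V₁ : Submodule ℂ (Fin m₁ → ℂ))
    (V₂ : Submodule ℂ (Fin m₂ → ℂ)) :
    V₁.map (padL m₁ m₂) ⊓ V₂.map (padR m₁ m₂) = ⊥ := by
  rw [eq_bot_iff]
  rintro v ⟨⟨v₁, -, rfl⟩, ⟨v₂, -, hv⟩⟩
  have h0 : padL m₁ m₂ v₁ = 0 := by
    funext j
    refine Fin.addCases (fun i => ?_) (fun i => ?_) j
    · have := congrFun hv (Fin.castAdd m₂ i)
      simpa [padL, padR, Fin.append_left] using this.symm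
    · simp [padL, Fin.append_right]
  simp [h0]

lemma span_diff_ideal {m : ℕ} (S : Set (Amod m))
    (hS : ∀ s ∈ S, MvPowerSeries.constantCoeff s = 0)
    {φ : Amod m} (hφ : φ ∈ Ideal.span S) :
    MvPowerSeries.constantCoeff φ = 0 ∧
      diffAtZero φ ∈ Submodule.span ℂ (diffAtZero '' S) := by
  refine Submodule.span_induction (fun s hs => ⟨hS s hs, Submodule.subset_span ⟨s, hs, rfl⟩⟩)
    ⟨map_zero _, by rw [diffAtZero_zero]; exact Submodule.zero_mem _⟩
    (fun x y _ _ hx hy => ⟨by rw [map_add, hx.1, hy.1, add_zero],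
      by rw [diffAtZero_add]; exact Submodule.add_mem _ hx.2 hy.2⟩)
    (fun a x _ hx => ?_) hφ
  have hax : a • x = a * x := rfl
  refine ⟨by rw [hax, map_mul, hx.1, mul_zero], ?_⟩
  rw [hax, diffAtZero_mul a x hx.1]
  exact Submodule.smul_mem _ _ hx.2

end AuxCorank

/-- **Additivity of corank under Cartesian product.** If `J₁ ⊆ 𝒜 m₁` and `J₂ ⊆ 𝒜 m₂` are
proper ideals, then `corank (J₁ ⊞ J₂) = corank J₁ + corank J₂` in `𝒜 (m₁+m₂)`. -/
theorem corank_prodIdeal_add (m₁ m₂ : ℕ) (J₁ : Ideal (Amod m₁)) (J₂ : Ideal (Amod m₂))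
    (h₁ : J₁ ≠ ⊤) (h₂ : J₂ ≠ ⊤) :
    corankIdeal (prodIdeal J₁ J₂) = corankIdeal J₁ + corankIdeal J₂ := by
    classical
  set S : Set (Amod (m₁ + m₂)) :=
    embL '' (J₁ : Set (Amod m₁)) ∪ embR '' (J₂ : Set (Amod m₂)) with hSdef
  set V₁ := Submodule.span ℂ (diffAtZero '' (J₁ : Set (Amod m₁))) with hV₁
  set V₂ := Submodule.span ℂ (diffAtZero '' (J₂ : Set (Amod m₂))) with hV₂
  have hS : ∀ s ∈ S, MvPowerSeries.constantCoeff s = 0 := by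
    rintro s (⟨φ, hφ, rfl⟩ | ⟨φ, hφ, rfl⟩)
    · rw [constantCoeff_embL]; exact constCoeff_of_mem h₁ hφ
    · rw [constantCoeff_embR]; exact constCoeff_of_mem h₂ hφ
  have hspan : Submodule.span ℂ (diffAtZero '' (prodIdeal J₁ J₂ : Set (Amod (m₁ + m₂))))
      = V₁.map (padL m₁ m₂) ⊔ V₂.map (padR m₁ m₂) := by
    apply le_antisymm
    · rw [Submodule.span_le]
      rintro _ ⟨φ, hφ, rfl⟩
      have h := (span_diff_ideal S hS hφ).2
      refine Submodule.span_le.2 ?_ h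
      rintro _ ⟨s, hs, rfl⟩
      rcases hs with ⟨ψ, hψ, rfl⟩ | ⟨ψ, hψ, rfl⟩
      · rw [diffAtZero_embL]
        exact Submodule.mem_sup_left
          ⟨diffAtZero ψ, Submodule.subset_span ⟨ψ, hψ, rfl⟩, rfl⟩
      · rw [diffAtZero_embR]
        exact Submodule.mem_sup_right
          ⟨diffAtZero ψ, Submodule.subset_span ⟨ψ, hψ, rfl⟩, rfl⟩
    · refine sup_le ?_ ?_
      · rw [hV₁, Submodule.map_span, Submodule.span_le]
        rintro _ ⟨_, ⟨ψ, hψ, rfl⟩, rfl⟩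
        refine Submodule.subset_span ⟨embL ψ, ?_, ?_⟩
        · exact Ideal.subset_span (Or.inl ⟨ψ, hψ, rfl⟩)
        · rw [diffAtZero_embL]; rfl
      · rw [hV₂, Submodule.map_span, Submodule.span_le]
        rintro _ ⟨_, ⟨ψ, hψ, rfl⟩, rfl⟩
        refine Submodule.subset_span ⟨embR ψ, ?_, ?_⟩
        · exact Ideal.subset_span (Or.inr ⟨ψ, hψ, rfl⟩)
        · rw [diffAtZero_embR]; rfl
  have hr : rankIdeal (prodIdeal J₁ J₂) = rankIdeal J₁ + rankIdeal J₂ := by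
    have h1 : Module.finrank ℂ (V₁.map (padL m₁ m₂)) = Module.finrank ℂ V₁ :=
      ((Submodule.equivMapOfInjective _ (padL_inj m₁ m₂) V₁).symm).finrank_eq
    have h2 : Module.finrank ℂ (V₂.map (padR m₁ m₂)) = Module.finrank ℂ V₂ :=
      ((Submodule.equivMapOfInjective _ (padR_inj m₁ m₂) V₂).symm).finrank_eq
    have h3 := Submodule.finrank_sup_add_finrank_inf_eq
      (V₁.map (padL m₁ m₂)) (V₂.map (padR m₁ m₂))
    rw [pad_disjoint, finrank_bot, add_zero] at h3
    show Module.finrank ℂ _ = _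
    rw [hspan, h3, h1, h2]
    rfl
  have hb1 : rankIdeal J₁ ≤ m₁ := by
    have := Submodule.finrank_le V₁
    simpa [rankIdeal] using this
  have hb2 : rankIdeal J₂ ≤ m₂ := by
    have := Submodule.finrank_le V₂
    simpa [rankIdeal] using this
  rw [corankIdeal, corankIdeal, corankIdeal, hr]
  omega
end

section
/- Let J_1 ⊆ 𝒜_{m_1} and J_2 ⊆ 𝒜_{m_2} be proper ideals, write TB(J_t) = (s_1^{(t)}, s_2^{(t)}, …) for t = 1, 2, and set s_q = s_q^{(1)} + s_q^{(2)} for each q ≥ 1. Then for every p ≥ 1 the iterated critical extensions of the product ideal split as products: Δ^{s_p} Δ^{s_{p−1}} ⋯ Δ^{s_1}(J_1 ⊞ J_2) = (Δ^{s_p^{(1)}} ⋯ Δ^{s_1^{(1)}} J_1) ⊞ (Δ^{s_p^{(2)}} ⋯ Δ^{s_1^{(2)}} J_2) as ideals of 𝒜_{m_1+m_2}. -/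
open MvPowerSeries

/-- Iterated upper Jacobian extensions `Δ^{s p} ⋯ Δ^{s 1} K₀` along a prescribed sequence
`s` of upper indices (0-indexed: the extension at step `q+1` uses index `s q`). -/
noncomputable def iterExt {m : ℕ} (K₀ : Ideal (Amod m)) (s : ℕ → ℕ) : ℕ → Ideal (Amod m)
  | 0 => K₀
  | p + 1 => jacExtUpper (s p) (iterExt K₀ s p)

lemma coeff_pd {m : ℕ} (j : Fin m) (φ : Amod m) (e : Fin m →₀ ℕ) :
    MvPowerSeries.coeff e (pd j φ) =
      ((e j + 1 : ℕ) : ℂ) * MvPowerSeries.coeff (e + Finsupp.single j 1) φ := rfl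

lemma pd_add {m : ℕ} (j : Fin m) (f g : Amod m) : pd j (f + g) = pd j f + pd j g := by
  ext e
  simp [coeff_pd, map_add, mul_add]

noncomputable def pdHom {m : ℕ} (j : Fin m) : Amod m →+ Amod m :=
  AddMonoidHom.mk' (pd j) (pd_add j)

lemma pd_mul {m : ℕ} (j : Fin m) (f g : Amod m) :
    pd j (f * g) = pd j f * g + f * pd j g := by
  classical
  ext e
  set δ : Fin m →₀ ℕ := Finsupp.single j 1 with hδ
  have hδj : δ j = 1 := by simp [hδ]
  rw [map_add, coeff_pd, MvPowerSeries.coeff_mul, MvPowerSeries.coeff_mul,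
    MvPowerSeries.coeff_mul]
  have hA : ∑ p ∈ Finset.HasAntidiagonal.antidiagonal e,
      MvPowerSeries.coeff p.1 (pd j f) * MvPowerSeries.coeff p.2 g
      = ∑ q ∈ Finset.HasAntidiagonal.antidiagonal (e + δ),
        ((q.1 j : ℕ) : ℂ) * (MvPowerSeries.coeff q.1 f * MvPowerSeries.coeff q.2 g) := by
    conv_rhs => rw [← Finset.sum_filter_of_ne (p := fun q => q.1 j ≠ 0)
      (by intro q hq hF; by_contra h0; simp [h0] at hF)]
    refine Finset.sum_nbij' (fun p => (p.1 + δ, p.2)) (fun q => (q.1 - δ, q.2)) ?_ ?_ ?_ ?_ ?_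
    · intro p hp
      simp only [Finset.HasAntidiagonal.mem_antidiagonal] at hp
      simp only [Finset.mem_filter, Finset.HasAntidiagonal.mem_antidiagonal]
      constructor
      · rw [← hp]; ext x; simp [add_comm, add_assoc, add_left_comm]
      · simp [hδj]
    · intro q hq
      simp only [Finset.mem_filter, Finset.HasAntidiagonal.mem_antidiagonal] at hq
      obtain ⟨hq1, hq2⟩ := hq
      simp only [Finset.HasAntidiagonal.mem_antidiagonal]
      have := fun x => DFunLike.congr_fun hq1 x
      ext x
      have h1 := this x
      simp only [Finsupp.add_apply] at h1 ⊢
      rw [Finsupp.tsub_apply]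
      rcases eq_or_ne x j with rfl | hx
      · simp only [hδj] at h1 ⊢; omega
      · have : δ x = 0 := by simp [hδ, Finsupp.single_apply_eq_zero]; tauto
        simp [this] at h1 ⊢; omega
    · intro p hp
      have h1 : p.1 + δ - δ = p.1 := by ext x; rw [Finsupp.tsub_apply]; simp
      dsimp only
      rw [h1]
    · intro q hq
      simp only [Finset.mem_filter, Finset.HasAntidiagonal.mem_antidiagonal] at hq
      obtain ⟨hq1, hq2⟩ := hq
      have h1 : q.1 - δ + δ = q.1 := by
        ext x; rw [Finsupp.add_apply, Finsupp.tsub_apply]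
        rcases eq_or_ne x j with rfl | hx
        · simp only [hδj]; omega
        · have : δ x = 0 := by simp [hδ, Finsupp.single_apply_eq_zero]; tauto
          simp [this]
      dsimp only
      rw [h1]
    · intro p hp
      simp only [coeff_pd]
      have : (p.1 + δ) j = p.1 j + 1 := by simp [hδj]
      rw [this]
      push_cast
      ring
  have hB : ∑ p ∈ Finset.HasAntidiagonal.antidiagonal e,
      MvPowerSeries.coeff p.1 f * MvPowerSeries.coeff p.2 (pd j g)
      = ∑ q ∈ Finset.HasAntidiagonal.antidiagonal (e + δ),
        ((q.2 j : ℕ) : ℂ) * (MvPowerSeries.coeff q.1 f * MvPowerSeries.coeff q.2 g) := by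
    conv_rhs => rw [← Finset.sum_filter_of_ne (p := fun q => q.2 j ≠ 0)
      (by intro q hq hF; by_contra h0; simp [h0] at hF)]
    refine Finset.sum_nbij' (fun p => (p.1, p.2 + δ)) (fun q => (q.1, q.2 - δ)) ?_ ?_ ?_ ?_ ?_
    · intro p hp
      simp only [Finset.HasAntidiagonal.mem_antidiagonal] at hp
      simp only [Finset.mem_filter, Finset.HasAntidiagonal.mem_antidiagonal]
      constructor
      · rw [← hp]; ext x; simp [add_comm, add_assoc, add_left_comm]
      · simp [hδj]
    · intro q hq
      simp only [Finset.mem_filter, Finset.HasAntidiagonal.mem_antidiagonal] at hq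
      obtain ⟨hq1, hq2⟩ := hq
      simp only [Finset.HasAntidiagonal.mem_antidiagonal]
      have := fun x => DFunLike.congr_fun hq1 x
      ext x
      have h1 := this x
      simp only [Finsupp.add_apply] at h1 ⊢
      rw [Finsupp.tsub_apply]
      rcases eq_or_ne x j with rfl | hx
      · simp only [hδj] at h1 ⊢; omega
      · have : δ x = 0 := by simp [hδ, Finsupp.single_apply_eq_zero]; tauto
        simp [this] at h1 ⊢; omega
    · intro p hp
      have h1 : p.2 + δ - δ = p.2 := by ext x; rw [Finsupp.tsub_apply]; simp
      dsimp only
      rw [h1]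
    · intro q hq
      simp only [Finset.mem_filter, Finset.HasAntidiagonal.mem_antidiagonal] at hq
      obtain ⟨hq1, hq2⟩ := hq
      have h1 : q.2 - δ + δ = q.2 := by
        ext x; rw [Finsupp.add_apply, Finsupp.tsub_apply]
        rcases eq_or_ne x j with rfl | hx
        · simp only [hδj]; omega
        · have : δ x = 0 := by simp [hδ, Finsupp.single_apply_eq_zero]; tauto
          simp [this]
      dsimp only
      rw [h1]
    · intro p hp
      simp only [coeff_pd]
      have : (p.2 + δ) j = p.2 j + 1 := by simp [hδj]
      rw [this]
      push_cast
      ring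
  rw [hA, hB, ← Finset.sum_add_distrib, Finset.mul_sum]
  refine Finset.sum_congr rfl ?_
  intro q hq
  simp only [Finset.HasAntidiagonal.mem_antidiagonal] at hq
  have : q.1 j + q.2 j = e j + 1 := by
    have := DFunLike.congr_fun hq j
    simp only [Finsupp.add_apply, hδj] at this
    omega
  rw [← add_mul]
  congr 1
  push_cast [← this]
  ring
noncomputable section ExtSection

open Classical in
/-- Extension of a power series along an injective map of variables. -/
noncomputable def vext {a m : ℕ} (u : Fin a → Fin m) (φ : Amod a) : Amod m :=
  fun d => if ∀ x : Fin m, x ∉ Set.range u → d x = 0 then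
    MvPowerSeries.coeff (Finsupp.equivFunOnFinite.symm fun i => d (u i)) φ else 0

variable {a m : ℕ} {u : Fin a → Fin m}
variable (hu : Function.Injective u)

/-- pullback of an exponent. -/
noncomputable def epull (u : Fin a → Fin m) (d : Fin m →₀ ℕ) : Fin a →₀ ℕ :=
  Finsupp.equivFunOnFinite.symm fun i => d (u i)

/-- pushforward of an exponent. -/
noncomputable def epush (hu : Function.Injective u) (c : Fin a →₀ ℕ) : Fin m →₀ ℕ :=
  Finsupp.embDomain ⟨u, hu⟩ c

lemma epull_apply (d : Fin m →₀ ℕ) (i : Fin a) : epull u d i = d (u i) := rfl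

lemma epull_add (d d' : Fin m →₀ ℕ) : epull u (d + d') = epull u d + epull u d' := by
  ext i; simp [epull_apply]

lemma epush_apply_mem (c : Fin a →₀ ℕ) (i : Fin a) : epush hu c (u i) = c i := by
  simp [epush, Finsupp.embDomain_apply]
  congr 1; exact hu (Exists.choose_spec (⟨i, rfl⟩ : ∃ a, u a = u i))

lemma epush_apply_not_mem (c : Fin a →₀ ℕ) {x : Fin m} (hx : x ∉ Set.range u) :
    epush hu c x = 0 := by
  apply Finsupp.embDomain_notin_range
  simpa [Set.range] using hx

lemma epull_epush (c : Fin a →₀ ℕ) : epull u (epush hu c) = c := by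
  ext i; rw [epull_apply, epush_apply_mem]

lemma cond_epush (c : Fin a →₀ ℕ) : ∀ x : Fin m, x ∉ Set.range u → epush hu c x = 0 :=
  fun _ hx => epush_apply_not_mem hu c hx

lemma epush_epull {d : Fin m →₀ ℕ} (hd : ∀ x : Fin m, x ∉ Set.range u → d x = 0) :
    epush hu (epull u d) = d := by
  ext x
  by_cases hx : x ∈ Set.range u
  · obtain ⟨i, rfl⟩ := hx
    rw [epush_apply_mem, epull_apply]
  · rw [epush_apply_not_mem hu _ hx, hd x hx]

lemma epush_add (c c' : Fin a →₀ ℕ) : epush hu (c + c') = epush hu c + epush hu c' :=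
  Finsupp.embDomain_add _ _ _

lemma coeff_vext_epush (φ : Amod a) (c : Fin a →₀ ℕ) :
    MvPowerSeries.coeff (epush hu c) (vext u φ) = MvPowerSeries.coeff c φ := by
  show vext u φ (epush hu c) = _
  rw [vext, if_pos (cond_epush hu c)]
  show MvPowerSeries.coeff (epull u (epush hu c)) φ = _
  rw [epull_epush hu]

lemma coeff_vext_of_cond (φ : Amod a) {d : Fin m →₀ ℕ}
    (hd : ∀ x : Fin m, x ∉ Set.range u → d x = 0) :
    MvPowerSeries.coeff d (vext u φ) = MvPowerSeries.coeff (epull u d) φ := by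
  show vext u φ d = _
  rw [vext, if_pos hd]; rfl

lemma coeff_vext_of_not_cond (φ : Amod a) {d : Fin m →₀ ℕ}
    (hd : ¬ ∀ x : Fin m, x ∉ Set.range u → d x = 0) :
    MvPowerSeries.coeff d (vext u φ) = 0 := by
  show vext u φ d = _
  rw [vext, if_neg hd]

lemma vext_add (f g : Amod a) : vext u (f + g) = vext u f + vext u g := by
  ext d
  by_cases hd : ∀ x : Fin m, x ∉ Set.range u → d x = 0
  · rw [map_add, coeff_vext_of_cond _ hd, coeff_vext_of_cond _ hd, coeff_vext_of_cond _ hd,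
      map_add]
  · rw [map_add, coeff_vext_of_not_cond _ hd, coeff_vext_of_not_cond _ hd,
      coeff_vext_of_not_cond _ hd, add_zero]

lemma vext_one : vext u (1 : Amod a) = 1 := by
  ext d
  by_cases hd : ∀ x : Fin m, x ∉ Set.range u → d x = 0
  · rw [coeff_vext_of_cond _ hd, MvPowerSeries.coeff_one, MvPowerSeries.coeff_one]
    congr 1
    simp only [eq_iff_iff]
    constructor
    · intro h
      ext x
      by_cases hx : x ∈ Set.range u
      · obtain ⟨i, rfl⟩ := hx
        have := DFunLike.congr_fun h i
        rw [epull_apply] at this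
        exact this
      · exact hd x hx
    · intro h; subst h; ext i; simp [epull_apply]
  · rw [coeff_vext_of_not_cond _ hd, MvPowerSeries.coeff_one, if_neg]
    intro h; subst h; exact hd (fun x _ => rfl)

lemma vext_mul (hu : Function.Injective u) (f g : Amod a) : vext u (f * g) = vext u f * vext u g := by
  classical
  ext d
  by_cases hd : ∀ x : Fin m, x ∉ Set.range u → d x = 0
  · rw [coeff_vext_of_cond _ hd, MvPowerSeries.coeff_mul, MvPowerSeries.coeff_mul]
    refine Finset.sum_nbij' (fun p => (epush hu p.1, epush hu p.2))
      (fun q => (epull u q.1, epull u q.2)) ?_ ?_ ?_ ?_ ?_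
    · intro p hp
      simp only [Finset.HasAntidiagonal.mem_antidiagonal] at hp ⊢
      rw [← epush_add hu, hp, epush_epull hu hd]
    · intro q hq
      simp only [Finset.HasAntidiagonal.mem_antidiagonal] at hq ⊢
      rw [← epull_add, hq]
    · intro p hp
      dsimp only
      rw [epull_epush hu, epull_epush hu]
    · intro q hq
      simp only [Finset.HasAntidiagonal.mem_antidiagonal] at hq
      have h1 : ∀ x : Fin m, x ∉ Set.range u → q.1 x = 0 := by
        intro x hx
        have := DFunLike.congr_fun hq x
        have h2 := hd x hx
        simp only [Finsupp.add_apply] at this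
        omega
      have h2 : ∀ x : Fin m, x ∉ Set.range u → q.2 x = 0 := by
        intro x hx
        have := DFunLike.congr_fun hq x
        have h2 := hd x hx
        simp only [Finsupp.add_apply] at this
        omega
      dsimp only
      rw [epush_epull hu h1, epush_epull hu h2]
    · intro p hp
      dsimp only
      rw [coeff_vext_epush hu, coeff_vext_epush hu]
  · rw [coeff_vext_of_not_cond _ hd, MvPowerSeries.coeff_mul]
    symm
    apply Finset.sum_eq_zero
    intro q hq
    simp only [Finset.HasAntidiagonal.mem_antidiagonal] at hq
    push_neg at hd
    obtain ⟨x, hx, hdx⟩ := hd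
    have := DFunLike.congr_fun hq x
    simp only [Finsupp.add_apply] at this
    rcases Nat.eq_zero_or_pos (q.1 x) with h1 | h1
    · have h2 : ¬ ∀ y : Fin m, y ∉ Set.range u → q.2 y = 0 := by
        intro h; have := h x hx; omega
      rw [coeff_vext_of_not_cond _ h2, mul_zero]
    · have h2 : ¬ ∀ y : Fin m, y ∉ Set.range u → q.1 y = 0 := by
        intro h; have := h x hx; omega
      rw [coeff_vext_of_not_cond _ h2, zero_mul]

/-- `vext` as a ring homomorphism. -/
noncomputable def vextHom (hu : Function.Injective u) : Amod a →+* Amod m where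
  toFun := vext u
  map_one' := vext_one
  map_mul' := vext_mul hu
  map_zero' := by
    ext d
    by_cases hd : ∀ x : Fin m, x ∉ Set.range u → d x = 0
    · rw [coeff_vext_of_cond _ hd]; simp
    · rw [coeff_vext_of_not_cond _ hd]; simp
  map_add' := vext_add

lemma vextHom_apply (φ : Amod a) : vextHom hu φ = vext u φ := rfl

lemma constantCoeff_vext (hu : Function.Injective u) (φ : Amod a) :
    (MvPowerSeries.constantCoeff (σ := Fin m) (R := ℂ)) (vext u φ) =
      (MvPowerSeries.constantCoeff (σ := Fin a) (R := ℂ)) φ := by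
  have h0 : (0 : Fin m →₀ ℕ) = epush hu 0 := by
    ext x; rw [Finsupp.coe_zero, Pi.zero_apply]
    by_cases hx : x ∈ Set.range u
    · obtain ⟨i, rfl⟩ := hx; rw [epush_apply_mem]; rfl
    · rw [epush_apply_not_mem hu _ hx]
  rw [← MvPowerSeries.coeff_zero_eq_constantCoeff, ← MvPowerSeries.coeff_zero_eq_constantCoeff,
    h0, coeff_vext_epush hu]

lemma pd_vext (hu : Function.Injective u) (φ : Amod a) (j : Fin a) : pd (u j) (vext u φ) = vext u (pd j φ) := by
  ext d
  by_cases hd : ∀ x : Fin m, x ∉ Set.range u → d x = 0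
  · have hd' : ∀ x : Fin m, x ∉ Set.range u → ((d + Finsupp.single (u j) 1 : Fin m →₀ ℕ)) x = 0 := by
      intro x hx
      rw [Finsupp.add_apply, hd x hx, Finsupp.single_apply, if_neg, add_zero]
      intro h; exact hx ⟨j, h⟩
    rw [coeff_pd, coeff_vext_of_cond _ hd, coeff_vext_of_cond _ hd', coeff_pd]
    have h1 : epull u (d + Finsupp.single (u j) 1) =
        epull u d + Finsupp.single j 1 := by
      ext i
      rw [Finsupp.add_apply, epull_apply, Finsupp.add_apply, epull_apply,
        Finsupp.single_apply, Finsupp.single_apply]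
      by_cases hij : i = j
      · subst hij; simp
      · rw [if_neg (fun h => hij (hu h.symm)), if_neg (fun h => hij h.symm)]
    rw [h1]
    rfl
  · have hd' : ¬ ∀ x : Fin m, x ∉ Set.range u → ((d + Finsupp.single (u j) 1 : Fin m →₀ ℕ)) x = 0 := by
      intro h
      apply hd
      intro x hx
      have := h x hx
      rw [Finsupp.add_apply] at this
      omega
    rw [coeff_pd, coeff_vext_of_not_cond _ hd', coeff_vext_of_not_cond _ hd, mul_zero]

lemma pd_vext_zero (φ : Amod a) {x : Fin m} (hx : x ∉ Set.range u) :
    pd x (vext u φ) = 0 := by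
  ext d
  have hd' : ¬ ∀ y : Fin m, y ∉ Set.range u → ((d + Finsupp.single x 1 : Fin m →₀ ℕ)) y = 0 := by
    intro h
    have := h x hx
    simp [Finsupp.add_apply, Finsupp.single_apply] at this
  rw [coeff_pd, coeff_vext_of_not_cond _ hd', mul_zero, map_zero]

end ExtSection
section EmbEq

variable {m₁ m₂ : ℕ}

lemma castAdd_inj : Function.Injective (Fin.castAdd m₂ : Fin m₁ → Fin (m₁ + m₂)) := by
  intro a b h
  apply Fin.ext
  have := congrArg Fin.val h
  simpa using this

lemma natAdd_inj : Function.Injective (Fin.natAdd m₁ : Fin m₂ → Fin (m₁ + m₂)) := by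
  intro a b h
  apply Fin.ext
  have := congrArg Fin.val h
  simpa using this

lemma mem_range_castAdd {x : Fin (m₁ + m₂)} :
    x ∈ Set.range (Fin.castAdd m₂ : Fin m₁ → Fin (m₁ + m₂)) ↔ (x : ℕ) < m₁ := by
  constructor
  · rintro ⟨i, rfl⟩; exact i.2
  · intro h; exact ⟨⟨x, h⟩, Fin.ext rfl⟩

lemma mem_range_natAdd {x : Fin (m₁ + m₂)} :
    x ∈ Set.range (Fin.natAdd m₁ : Fin m₂ → Fin (m₁ + m₂)) ↔ m₁ ≤ (x : ℕ) := by
  constructor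
  · rintro ⟨i, rfl⟩; exact Nat.le_add_right _ _
  · intro h; exact ⟨⟨x - m₁, by omega⟩, Fin.ext (by simp; omega)⟩

lemma embL_eq : (embL : Amod m₁ → Amod (m₁ + m₂)) = vext (Fin.castAdd m₂) := by
  funext φ d
  show (if _ then _ else _) = (if _ then _ else _)
  refine if_congr ?_ rfl rfl
  constructor
  · intro h x hx
    rw [mem_range_castAdd] at hx
    push_neg at hx
    have hx2 : x = Fin.natAdd m₁ ⟨(x : ℕ) - m₁, by omega⟩ := Fin.ext (by simp; omega)
    rw [hx2]
    exact h _
  · intro h j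
    apply h
    rw [mem_range_castAdd]
    simp

lemma embR_eq : (embR : Amod m₂ → Amod (m₁ + m₂)) = vext (Fin.natAdd m₁) := by
  funext φ d
  show (if _ then _ else _) = (if _ then _ else _)
  refine if_congr ?_ rfl rfl
  constructor
  · intro h x hx
    rw [mem_range_natAdd] at hx
    push_neg at hx
    have hx2 : x = Fin.castAdd m₂ ⟨(x : ℕ), hx⟩ := Fin.ext rfl
    rw [hx2]
    exact h _
  · intro h j
    apply h
    rw [mem_range_natAdd]
    simp

lemma prodIdeal_eq (J₁ : Ideal (Amod m₁)) (J₂ : Ideal (Amod m₂)) :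
    prodIdeal J₁ J₂ = Ideal.span
      (vext (Fin.castAdd m₂) '' (J₁ : Set (Amod m₁)) ∪
       vext (Fin.natAdd m₁) '' (J₂ : Set (Amod m₂))) := by
  rw [prodIdeal, embL_eq, embR_eq]

lemma prodIdeal_mono {J₁ K₁ : Ideal (Amod m₁)} {J₂ K₂ : Ideal (Amod m₂)}
    (h₁ : J₁ ≤ K₁) (h₂ : J₂ ≤ K₂) : prodIdeal J₁ J₂ ≤ prodIdeal K₁ K₂ := by
  apply Ideal.span_mono
  apply Set.union_subset_union <;> apply Set.image_mono
  · exact h₁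
  · exact h₂

lemma vextL_mem_prodIdeal {J₁ : Ideal (Amod m₁)} {J₂ : Ideal (Amod m₂)}
    {φ : Amod m₁} (h : φ ∈ J₁) : vext (Fin.castAdd m₂) φ ∈ prodIdeal J₁ J₂ := by
  rw [prodIdeal_eq]
  exact Ideal.subset_span (Or.inl ⟨φ, h, rfl⟩)

lemma vextR_mem_prodIdeal {J₁ : Ideal (Amod m₁)} {J₂ : Ideal (Amod m₂)}
    {ψ : Amod m₂} (h : ψ ∈ J₂) : vext (Fin.natAdd m₁) ψ ∈ prodIdeal J₁ J₂ := by
  rw [prodIdeal_eq]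
  exact Ideal.subset_span (Or.inr ⟨ψ, h, rfl⟩)

end EmbEq

section FinSplit

/-- Explicit splitting of `Fin k` given `k = k₁ + k₂`. -/
def finSplit {k k₁ k₂ : ℕ} (h : k = k₁ + k₂) : Fin k ≃ (Fin k₁ ⊕ Fin k₂) where
  toFun x := if hx : (x : ℕ) < k₁ then Sum.inl ⟨x, hx⟩ else Sum.inr ⟨(x : ℕ) - k₁, by omega⟩
  invFun := Sum.elim (fun i => ⟨i, by omega⟩) (fun i => ⟨k₁ + i, by omega⟩)
  left_inv x := by
    by_cases hx : (x : ℕ) < k₁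
    · simp [hx]
    · simp [hx]; apply Fin.ext; simp; omega
  right_inv z := by
    rcases z with i | i
    · simp [i.2]
    · have : ¬ (k₁ + (i : ℕ) < k₁) := by omega
      simp [this]

/-- Splitting of `Fin k` along a finset of cardinality `t₁` with complement of
cardinality `t₂`. -/
noncomputable def finsetSplit {k t₁ t₂ : ℕ} (s : Finset (Fin k)) (h₁ : s.card = t₁)
    (h₂ : sᶜ.card = t₂) : (Fin t₁ ⊕ Fin t₂) ≃ Fin k where
  toFun := Sum.elim (fun z => (s.orderIsoOfFin h₁ z : Fin k))
    (fun z => (sᶜ.orderIsoOfFin h₂ z : Fin k))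
  invFun x := if hx : x ∈ s then Sum.inl ((s.orderIsoOfFin h₁).symm ⟨x, hx⟩)
    else Sum.inr ((sᶜ.orderIsoOfFin h₂).symm ⟨x, Finset.mem_compl.2 hx⟩)
  left_inv z := by
    rcases z with z | z
    · have hm : ((s.orderIsoOfFin h₁ z : Fin k)) ∈ s := (s.orderIsoOfFin h₁ z).2
      simp only [Sum.elim_inl, hm, dif_pos]
      exact (dif_pos hm).trans (congrArg Sum.inl ((s.orderIsoOfFin h₁).symm_apply_apply z))
    · have hm : ((sᶜ.orderIsoOfFin h₂ z : Fin k)) ∈ sᶜ := (sᶜ.orderIsoOfFin h₂ z).2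
      have hm' : ((sᶜ.orderIsoOfFin h₂ z : Fin k)) ∉ s := Finset.mem_compl.1 hm
      simp only [Sum.elim_inr, hm', dif_neg, not_false_iff]
      exact (dif_neg hm').trans (congrArg Sum.inr ((sᶜ.orderIsoOfFin h₂).symm_apply_apply z))
  right_inv x := by
    by_cases hx : x ∈ s
    · simp only [hx, dif_pos, Sum.elim_inl]
      exact congrArg Subtype.val ((s.orderIsoOfFin h₁).apply_symm_apply ⟨x, hx⟩)
    · simp only [hx, dif_neg, not_false_iff, Sum.elim_inr]
      exact congrArg Subtype.val ((sᶜ.orderIsoOfFin h₂).apply_symm_apply ⟨x, Finset.mem_compl.2 hx⟩)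

lemma finsetSplit_inl_mem {k t₁ t₂ : ℕ} (s : Finset (Fin k)) (h₁ : s.card = t₁)
    (h₂ : sᶜ.card = t₂) (z : Fin t₁) : finsetSplit s h₁ h₂ (Sum.inl z) ∈ s :=
  (s.orderIsoOfFin h₁ z).2

lemma finsetSplit_inr_not_mem {k t₁ t₂ : ℕ} (s : Finset (Fin k)) (h₁ : s.card = t₁)
    (h₂ : sᶜ.card = t₂) (z : Fin t₂) : finsetSplit s h₁ h₂ (Sum.inr z) ∉ s :=
  Finset.mem_compl.1 (sᶜ.orderIsoOfFin h₂ z).2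

end FinSplit
section DetLemmas

open Matrix Equiv

lemma det_eq_zero_of_mismatch {R : Type*} [CommRing R] {n : Type*} [DecidableEq n] [Fintype n]
    (M : Matrix n n R) (P Q : Finset n)
    (h : ∀ i j, M i j ≠ 0 → (i ∈ P ↔ j ∈ Q)) (hcard : P.card ≠ Q.card) :
    M.det = 0 := by
  rw [Matrix.det_apply]
  apply Finset.sum_eq_zero
  intro σ _
  have hz : ∃ j, M (σ j) j = 0 := by
    by_contra hc
    push_neg at hc
    have himg : Q.image σ = P := by
      apply Finset.Subset.antisymm
      · intro i hi
        obtain ⟨j, hj, rfl⟩ := Finset.mem_image.1 hi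
        exact (h _ _ (hc j)).2 hj
      · intro i hi
        refine Finset.mem_image.2 ⟨σ.symm i, ?_, by simp⟩
        have h2 := h (σ (σ.symm i)) (σ.symm i) (hc _)
        simp only [Equiv.apply_symm_apply] at h2
        exact h2.1 hi
    have hci := Finset.card_image_of_injective Q σ.injective
    rw [himg] at hci
    exact hcard hci
  obtain ⟨j, hj⟩ := hz
  have hp : ∏ i : n, M (σ i) i = 0 := Finset.prod_eq_zero (Finset.mem_univ j) hj
  rw [hp, smul_zero]

lemma mem_of_submatrix_equiv {R : Type*} [CommRing R] {n : Type*} [DecidableEq n] [Fintype n]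
    {k : ℕ} (I : Ideal R) (M : Matrix (Fin k) (Fin k) R) (eR eC : n ≃ Fin k)
    (h : (M.submatrix eR eC).det ∈ I) : M.det ∈ I := by
  have h1 : M.submatrix eR eC = (M.submatrix eR eR).submatrix id (eC.trans eR.symm) := by
    ext i j
    simp [Matrix.submatrix_apply]
  rw [h1, Matrix.det_permute' (eC.trans eR.symm) (M.submatrix eR eR),
    Matrix.det_submatrix_equiv_self eR M] at h
  rcases Int.units_eq_one_or (Equiv.Perm.sign (eC.trans eR.symm)) with hs | hs
  · rw [hs] at h; simpa using h
  · rw [hs] at h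
    simp only [Units.val_neg, Units.val_one, Int.cast_neg, Int.cast_one, neg_mul, one_mul] at h
    have := I.neg_mem h
    simpa using this

lemma minor_mem_jacExt {m : ℕ} (B : Ideal (Amod m)) (k : ℕ) :
    ∀ t, k ≤ t → ∀ (φ : Fin t → Amod m), (∀ i, φ i ∈ B) →
      ∀ (c : Fin t → Fin m), Function.Injective c →
      (Matrix.of fun i l => pd (c l) (φ i)).det ∈ jacExt k B := by
  intro t ht
  induction t, ht using Nat.le_induction with
  | base =>
    intro φ hφ c hc
    have hkm : k ≤ m := by
      have := Fintype.card_le_of_injective c hc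
      simpa using this
    rw [jacExt, if_neg (not_lt.2 hkm)]
    classical
    set s : Finset (Fin m) := Finset.univ.image c with hs
    have hcard : s.card = k := by
      rw [hs, Finset.card_image_of_injective _ hc, Finset.card_univ, Fintype.card_fin]
    set cmono : Fin k → Fin m := fun l => (s.orderIsoOfFin hcard l : Fin m) with hcm
    have hmono : StrictMono cmono := fun a b hab => (s.orderIsoOfFin hcard).strictMono hab
    have hmem : ∀ l, c l ∈ s := fun l => Finset.mem_image.2 ⟨l, Finset.mem_univ l, rfl⟩
    set π : Fin k → Fin k := fun l => (s.orderIsoOfFin hcard).symm ⟨c l, hmem l⟩ with hπ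
    have hcomp : ∀ l, cmono (π l) = c l := by
      intro l
      rw [hcm, hπ]
      exact congrArg Subtype.val ((s.orderIsoOfFin hcard).apply_symm_apply ⟨c l, hmem l⟩)
    have hπinj : Function.Injective π := by
      intro a b hab
      apply hc
      rw [← hcomp a, ← hcomp b, hab]
    let σ : Equiv.Perm (Fin k) := Equiv.ofBijective π (Finite.injective_iff_bijective.1 hπinj)
    have hMeq : (Matrix.of fun i l => pd (c l) (φ i)) =
        (Matrix.of fun i l => pd (cmono l) (φ i)).submatrix id σ := by
      ext i l
      simp only [Matrix.submatrix_apply, Matrix.of_apply, id_eq]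
      rw [show σ l = π l from rfl, hcomp]
    rw [hMeq, Matrix.det_permute' σ]
    apply Ideal.mul_mem_left
    apply Ideal.mem_sup_right
    apply Ideal.subset_span
    exact ⟨φ, hφ, cmono, hmono, rfl⟩
  | succ t ht ih =>
    intro φ hφ c hc
    rw [Matrix.det_succ_row_zero]
    apply Ideal.sum_mem
    intro l _
    apply Ideal.mul_mem_left
    have hsub : ((Matrix.of fun i l' => pd (c l') (φ i)).submatrix Fin.succ l.succAbove) =
        (Matrix.of fun i l' => pd ((c ∘ l.succAbove) l') ((φ ∘ Fin.succ) i)) := rfl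
    rw [hsub]
    exact ih (φ ∘ Fin.succ) (fun i => hφ _) (c ∘ l.succAbove)
      (hc.comp (Fin.succAbove_right_injective))

end DetLemmas
section RankLemmas

open Matrix

lemma constantCoeff_pd {m : ℕ} (j : Fin m) (φ : Amod m) :
    (MvPowerSeries.constantCoeff (σ := Fin m) (R := ℂ)) (pd j φ) = diffAtZero φ j := by
  rw [← MvPowerSeries.coeff_zero_eq_constantCoeff_apply, coeff_pd, diffAtZero]
  simp

lemma rankIdeal_le {m : ℕ} (B : Ideal (Amod m)) : rankIdeal B ≤ m := by
  rw [rankIdeal]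
  have h := Submodule.finrank_le (Submodule.span ℂ (diffAtZero '' (B : Set (Amod m))))
  rwa [Module.finrank_fin_fun] at h

lemma exists_indep_family {m : ℕ} (B : Ideal (Amod m)) :
    ∃ ψ : Fin (rankIdeal B) → Amod m,
      (∀ i, ψ i ∈ B) ∧ LinearIndependent ℂ (fun i => diffAtZero (ψ i)) := by
  classical
  obtain ⟨b, hbsub, hbspan, hbind⟩ :=
    exists_linearIndependent ℂ (diffAtZero '' (B : Set (Amod m)))
  have hbfin : b.Finite := by
    rw [← Set.finite_coe_iff]
    exact hbind.finite
  haveI : Fintype b := hbfin.fintype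
  have hcard : b.toFinset.card = rankIdeal B := by
    rw [rankIdeal, ← hbspan, finrank_span_set_eq_card hbind]
  let e0 : {x // x ∈ b.toFinset} ≃ Fin (rankIdeal B) := b.toFinset.equivFinOfCardEq hcard
  let e1 : b ≃ {x // x ∈ b.toFinset} := Equiv.subtypeEquivRight (by simp)
  let f : Fin (rankIdeal B) → (Fin m → ℂ) := fun i => ((e1.symm (e0.symm i)) : Fin m → ℂ)
  have hf : LinearIndependent ℂ f := hbind.comp _ ((e1.symm.injective).comp e0.symm.injective)
  have hmem : ∀ i, f i ∈ diffAtZero '' (B : Set (Amod m)) :=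
    fun i => hbsub (e1.symm (e0.symm i)).2
  choose ψ hψB hψd using fun i => hmem i
  refine ⟨ψ, hψB, ?_⟩
  have : (fun i => diffAtZero (ψ i)) = f := funext fun i => hψd i
  rw [this]
  exact hf

lemma exists_good_cols {r m : ℕ} (v : Fin r → (Fin m → ℂ)) (hv : LinearIndependent ℂ v) :
    ∃ c : Fin r → Fin m, StrictMono c ∧ (Matrix.of fun i l => v i (c l)).det ≠ 0 := by
  classical
  rcases Nat.eq_zero_or_pos m with hm | hm
  · subst hm
    have hr : r = 0 := by
      by_contra hr
      have := hv.comp (fun _ : Fin 1 => (⟨0, Nat.pos_of_ne_zero hr⟩ : Fin r))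
        (fun a b _ => Subsingleton.elim a b)
      have h0 : v ⟨0, Nat.pos_of_ne_zero hr⟩ = 0 := funext fun j => j.elim0
      have := Fintype.linearIndependent_iff.1 this (fun _ => 1) (by simp [h0])
      simpa using this ⟨0, Nat.one_pos⟩
    subst hr
    exact ⟨Fin.elim0, fun a => a.elim0, by rw [Matrix.det_fin_zero]; exact one_ne_zero⟩
  haveI : Nonempty (Fin m) := ⟨⟨0, hm⟩⟩
  set colM : Fin m → (Fin r → ℂ) := fun j i => v i j with hcolM
  have hW : Submodule.span ℂ (Set.range colM) = ⊤ := by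
    by_contra hW
    obtain ⟨f, hf0, hfbot⟩ := Submodule.exists_dual_map_eq_bot_of_lt_top
      (lt_top_iff_ne_top.2 hW) inferInstance
    set w : Fin r → ℂ := fun i => f (fun j' => if i = j' then 1 else 0) with hw
    have hfx : ∀ x ∈ Submodule.span ℂ (Set.range colM), f x = 0 := by
      intro x hx
      have : f x ∈ Submodule.map f (Submodule.span ℂ (Set.range colM)) :=
        Submodule.mem_map_of_mem hx
      rw [hfbot] at this
      simpa using this
    have hwv : ∑ i, w i • v i = 0 := by
      funext j
      have h1 : f (colM j) = 0 := hfx _ (Submodule.subset_span ⟨j, rfl⟩)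
      rw [LinearMap.pi_apply_eq_sum_univ f (colM j)] at h1
      simpa [hcolM, hw, mul_comm] using h1
    have hw0 : ∀ i, w i = 0 := by
      have := Fintype.linearIndependent_iff.1 hv w hwv
      exact this
    apply hf0
    apply LinearMap.ext
    intro x
    rw [LinearMap.pi_apply_eq_sum_univ f x]
    simp only [LinearMap.zero_apply]
    rw [Finset.sum_eq_zero]
    intro i _
    rw [show f (fun j' => if i = j' then 1 else 0) = w i from rfl, hw0 i, smul_zero]
  obtain ⟨b, hbsub, hbspan, hbind⟩ := exists_linearIndependent ℂ (Set.range colM)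
  have hbfin : b.Finite := by rw [← Set.finite_coe_iff]; exact hbind.finite
  haveI : Fintype b := hbfin.fintype
  have hcard : b.toFinset.card = r := by
    have h1 := finrank_span_set_eq_card hbind
    rw [hbspan, hW, finrank_top, Module.finrank_fin_fun] at h1
    omega
  set g : (Fin r → ℂ) → Fin m := fun y =>
    if h : y ∈ Set.range colM then h.choose else Classical.arbitrary (Fin m) with hg
  have hgspec : ∀ y ∈ Set.range colM, colM (g y) = y := by
    intro y hy
    rw [hg]
    simp only [hy, dif_pos]
    exact hy.choose_spec
  set J : Finset (Fin m) := b.toFinset.image g with hJ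
  have hJcard : J.card = r := by
    rw [hJ, Finset.card_image_of_injOn, hcard]
    intro y hy y' hy' hgy
    rw [Finset.mem_coe, Set.mem_toFinset] at hy hy'
    rw [← hgspec y (hbsub hy), ← hgspec y' (hbsub hy'), hgy]
  set c : Fin r → Fin m := fun l => (J.orderIsoOfFin hJcard l : Fin m) with hc
  have hmono : StrictMono c := fun a a' ha => (J.orderIsoOfFin hJcard).strictMono ha
  have hcb : ∀ l, colM (c l) ∈ b := by
    intro l
    have : c l ∈ J := (J.orderIsoOfFin hJcard l).2
    rw [hJ, Finset.mem_image] at this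
    obtain ⟨y, hy, hgy⟩ := this
    rw [Set.mem_toFinset] at hy
    rw [← hgy, hgspec y (hbsub hy)]
    exact hy
  have hceq : ∀ l, g (colM (c l)) = c l := by
    intro l
    have : c l ∈ J := (J.orderIsoOfFin hJcard l).2
    rw [hJ, Finset.mem_image] at this
    obtain ⟨y, hy, hgy⟩ := this
    rw [Set.mem_toFinset] at hy
    have : colM (c l) = y := by rw [← hgy, hgspec y (hbsub hy)]
    rw [this, hgy]
  set h : Fin r → b := fun l => ⟨colM (c l), hcb l⟩ with hh
  have hhinj : Function.Injective h := by
    intro l l' hll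
    have h1 : colM (c l) = colM (c l') := congrArg Subtype.val hll
    have h2 : c l = c l' := by rw [← hceq l, ← hceq l', h1]
    exact hmono.injective h2
  have hind : LinearIndependent ℂ (fun l => colM (c l)) := hbind.comp h hhinj
  refine ⟨c, hmono, ?_⟩
  set N : Matrix (Fin r) (Fin r) ℂ := Matrix.of fun i l => v i (c l) with hN
  have hNT : ∀ l, Nᵀ l = colM (c l) := fun l => rfl
  have : IsUnit N := by
    rw [← Matrix.linearIndependent_cols_iff_isUnit]
    have : (fun i => Nᵀ i) = fun l => colM (c l) := funext hNT
    change LinearIndependent ℂ (fun l => colM (c l))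
    exact hind
  rw [Matrix.isUnit_iff_isUnit_det, isUnit_iff_ne_zero] at this
  exact this

end RankLemmas
section Core

open Matrix

variable {m₁ m₂ : ℕ}

lemma jacExt_le {m : ℕ} (k : ℕ) (B : Ideal (Amod m)) : B ≤ jacExt k B := by
  rw [jacExt]
  split
  · exact le_rfl
  · exact le_sup_left

lemma pure_det_mem (B₁ : Ideal (Amod m₁)) (B₂ : Ideal (Amod m₂))
    {k : ℕ} (hk : k = rankIdeal B₁ + rankIdeal B₂ + 1)
    (g : Fin k → Amod (m₁ + m₂))
    (hg : ∀ i, (∃ φ ∈ B₁, g i = vext (Fin.castAdd m₂) φ) ∨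
               (∃ ψ ∈ B₂, g i = vext (Fin.natAdd m₁) ψ))
    (J : Fin k → Fin (m₁ + m₂)) (hJ : Function.Injective J) :
    (Matrix.of fun i l => pd (J l) (g i)).det ∈
      prodIdeal (jacExt (rankIdeal B₁ + 1) B₁) (jacExt (rankIdeal B₂ + 1) B₂) := by
  classical
  set K := prodIdeal (jacExt (rankIdeal B₁ + 1) B₁) (jacExt (rankIdeal B₂ + 1) B₂) with hK
  set M := Matrix.of fun i l => pd (J l) (g i) with hM
  set T : Finset (Fin k) :=
    Finset.univ.filter (fun i => ∃ φ ∈ B₁, g i = vext (Fin.castAdd m₂) φ) with hT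
  set C : Finset (Fin k) := Finset.univ.filter (fun l => (J l : ℕ) < m₁) with hC
  have hz1 : ∀ i l, i ∈ T → l ∉ C → M i l = 0 := by
    intro i l hi hl
    rw [hT, Finset.mem_filter] at hi
    obtain ⟨-, φ, hφ, hgi⟩ := hi
    rw [hC, Finset.mem_filter] at hl
    push_neg at hl
    have hnotr : J l ∉ Set.range (Fin.castAdd m₂ : Fin m₁ → Fin (m₁ + m₂)) := by
      rw [mem_range_castAdd]
      exact not_lt.2 (hl (Finset.mem_univ l))
    rw [hM]
    show pd (J l) (g i) = 0
    rw [hgi, pd_vext_zero _ hnotr]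
  have hz2 : ∀ i l, i ∉ T → l ∈ C → M i l = 0 := by
    intro i l hi hl
    have hi2 : ¬ ∃ φ ∈ B₁, g i = vext (Fin.castAdd m₂) φ := by
      intro hcontra
      exact hi (Finset.mem_filter.2 ⟨Finset.mem_univ i, hcontra⟩)
    rcases hg i with h1 | h2
    · exact absurd h1 hi2
    obtain ⟨ψ, hψ, hgi⟩ := h2
    rw [hC, Finset.mem_filter] at hl
    have hnotr : J l ∉ Set.range (Fin.natAdd m₁ : Fin m₂ → Fin (m₁ + m₂)) := by
      rw [mem_range_natAdd]
      omega
    rw [hM]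
    show pd (J l) (g i) = 0
    rw [hgi, pd_vext_zero _ hnotr]
  by_cases hcard : T.card = C.card
  · -- block case
    set t₁ := T.card with ht₁
    set t₂ := Tᶜ.card with ht₂
    have htt : t₁ + t₂ = k := by
      have h1 : Tᶜ.card = Fintype.card (Fin k) - T.card := Finset.card_compl T
      have h2 : T.card ≤ k := by
        have := Finset.card_le_univ T
        simpa using this
      rw [Fintype.card_fin] at h1
      omega
    have hcC : C.card = t₁ := hcard.symm
    have hcCc : Cᶜ.card = t₂ := by
      have h1 : Cᶜ.card = Fintype.card (Fin k) - C.card := Finset.card_compl C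
      have h3 : Tᶜ.card = Fintype.card (Fin k) - T.card := Finset.card_compl T
      rw [Fintype.card_fin] at h1 h3
      have h2 : C.card ≤ k := by
        have := Finset.card_le_univ C
        simpa using this
      omega
    set eR : (Fin t₁ ⊕ Fin t₂) ≃ Fin k := finsetSplit T rfl rfl with heR
    set eC : (Fin t₁ ⊕ Fin t₂) ≃ Fin k := finsetSplit C hcC hcCc with heC
    -- data for rows
    have hrow1 : ∀ z : Fin t₁, ∃ φ ∈ B₁,
        g (eR (Sum.inl z)) = vext (Fin.castAdd m₂) φ := by
      intro z
      have hmem := finsetSplit_inl_mem T rfl rfl z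
      exact (Finset.mem_filter.1 hmem).2
    have hrow2 : ∀ z : Fin t₂, ∃ ψ ∈ B₂,
        g (eR (Sum.inr z)) = vext (Fin.natAdd m₁) ψ := by
      intro z
      have hni := finsetSplit_inr_not_mem T rfl rfl z
      have hni2 : ¬ ∃ φ ∈ B₁, g (eR (Sum.inr z)) = vext (Fin.castAdd m₂) φ := by
        intro hcontra
        exact hni (Finset.mem_filter.2 ⟨Finset.mem_univ _, hcontra⟩)
      rcases hg (eR (Sum.inr z)) with h1 | h2
      · exact absurd h1 hni2
      · exact h2
    choose φf hφB hφeq using hrow1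
    choose ψf hψB hψeq using hrow2
    -- data for columns
    have hcol1 : ∀ z : Fin t₁, (J (eC (Sum.inl z)) : ℕ) < m₁ := by
      intro z
      have hmem := finsetSplit_inl_mem C hcC hcCc z
      exact (Finset.mem_filter.1 hmem).2
    have hcol2 : ∀ z : Fin t₂, m₁ ≤ (J (eC (Sum.inr z)) : ℕ) := by
      intro z
      have hni := finsetSplit_inr_not_mem C hcC hcCc z
      have hni2 : ¬ (J (eC (Sum.inr z)) : ℕ) < m₁ := by
        intro hcontra
        exact hni (Finset.mem_filter.2 ⟨Finset.mem_univ _, hcontra⟩)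
      omega
    set c1 : Fin t₁ → Fin m₁ := fun z => ⟨(J (eC (Sum.inl z)) : ℕ), hcol1 z⟩ with hc1
    set c2 : Fin t₂ → Fin m₂ := fun z =>
      ⟨(J (eC (Sum.inr z)) : ℕ) - m₁, by have := (J (eC (Sum.inr z))).2; have := hcol2 z; omega⟩
      with hc2
    have hJc1 : ∀ z, J (eC (Sum.inl z)) = Fin.castAdd m₂ (c1 z) := fun z => Fin.ext rfl
    have hJc2 : ∀ z, J (eC (Sum.inr z)) = Fin.natAdd m₁ (c2 z) := by
      intro z
      apply Fin.ext
      have := hcol2 z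
      show (J (eC (Sum.inr z)) : ℕ) = m₁ + ((J (eC (Sum.inr z)) : ℕ) - m₁)
      omega
    have hc1inj : Function.Injective c1 := by
      intro a b hab
      have : J (eC (Sum.inl a)) = J (eC (Sum.inl b)) := by
        rw [hJc1 a, hJc1 b, hab]
      have := hJ this
      have := eC.injective this
      exact Sum.inl_injective this
    have hc2inj : Function.Injective c2 := by
      intro a b hab
      have : J (eC (Sum.inr a)) = J (eC (Sum.inr b)) := by
        rw [hJc2 a, hJc2 b, hab]
      have := hJ this
      have := eC.injective this
      exact Sum.inr_injective this
    set A₀ : Matrix (Fin t₁) (Fin t₁) (Amod m₁) := Matrix.of fun i l => pd (c1 l) (φf i) with hA₀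
    set D₀ : Matrix (Fin t₂) (Fin t₂) (Amod m₂) := Matrix.of fun i l => pd (c2 l) (ψf i) with hD₀
    have hblock : M.submatrix eR eC =
        Matrix.fromBlocks (A₀.map (vext (Fin.castAdd m₂))) 0 0 (D₀.map (vext (Fin.natAdd m₁))) := by
      apply Matrix.ext
      intro i j
      rcases i with z | z <;> rcases j with w | w
      · show pd (J (eC (Sum.inl w))) (g (eR (Sum.inl z))) = _
        rw [hφeq z, hJc1 w]
        exact pd_vext castAdd_inj (φf z) (c1 w)
      · show pd (J (eC (Sum.inr w))) (g (eR (Sum.inl z))) = _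
        rw [hφeq z, hJc2 w, pd_vext_zero]
        · rfl
        · rw [mem_range_castAdd]
          simp [Fin.natAdd]
      · show pd (J (eC (Sum.inl w))) (g (eR (Sum.inr z))) = _
        rw [hψeq z, hJc1 w, pd_vext_zero]
        · rfl
        · rw [mem_range_natAdd]
          simp only [Fin.coe_castAdd]
          exact not_le.2 (c1 w).2
      · show pd (J (eC (Sum.inr w))) (g (eR (Sum.inr z))) = _
        rw [hψeq z, hJc2 w]
        exact pd_vext natAdd_inj (ψf z) (c2 w)
    apply mem_of_submatrix_equiv K M eR eC
    rw [hblock, Matrix.det_fromBlocks_zero₂₁]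
    have hdetA : (A₀.map (vext (Fin.castAdd m₂))).det =
        vext (Fin.castAdd m₂) A₀.det := by
      rw [show A₀.map (vext (Fin.castAdd m₂)) = (vextHom castAdd_inj).mapMatrix A₀ from rfl,
        ← RingHom.map_det]
      rfl
    have hdetD : (D₀.map (vext (Fin.natAdd m₁))).det =
        vext (Fin.natAdd m₁) D₀.det := by
      rw [show D₀.map (vext (Fin.natAdd m₁)) = (vextHom natAdd_inj).mapMatrix D₀ from rfl,
        ← RingHom.map_det]
      rfl
    rw [hdetA, hdetD]
    have hcases : rankIdeal B₁ + 1 ≤ t₁ ∨ rankIdeal B₂ + 1 ≤ t₂ := by omega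
    rcases hcases with hcase | hcase
    · apply Ideal.mul_mem_right
      rw [hK]
      apply vextL_mem_prodIdeal
      exact minor_mem_jacExt B₁ (rankIdeal B₁ + 1) t₁ hcase φf hφB c1 hc1inj
    · apply Ideal.mul_mem_left
      rw [hK]
      apply vextR_mem_prodIdeal
      exact minor_mem_jacExt B₂ (rankIdeal B₂ + 1) t₂ hcase ψf hψB c2 hc2inj
  · -- mismatch case: determinant vanishes
    have : M.det = 0 := by
      apply det_eq_zero_of_mismatch M T C _ hcard
      intro i l hMil
      constructor
      · intro hi
        by_contra hl
        exact hMil (hz1 i l hi hl)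
      · intro hl
        by_contra hi
        exact hMil (hz2 i l hi hl)
    rw [hM] at this
    rw [this]
    exact K.zero_mem

end Core
section Reduction

open Matrix

variable {m₁ m₂ : ℕ}

set_option synthInstance.maxHeartbeats 1000000 in
set_option maxHeartbeats 1600000 in
lemma gen_det_mem (B₁ : Ideal (Amod m₁)) (B₂ : Ideal (Amod m₂))
    {k : ℕ} (hk : k = rankIdeal B₁ + rankIdeal B₂ + 1)
    (φ : Fin k → Amod (m₁ + m₂)) (hφ : ∀ i, φ i ∈ prodIdeal B₁ B₂)
    (J : Fin k → Fin (m₁ + m₂)) (hJ : Function.Injective J) :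
    (Matrix.of fun i l => pd (J l) (φ i)).det ∈
      prodIdeal (jacExt (rankIdeal B₁ + 1) B₁) (jacExt (rankIdeal B₂ + 1) B₂) := by
  classical
  set K := prodIdeal (jacExt (rankIdeal B₁ + 1) B₁) (jacExt (rankIdeal B₂ + 1) B₂) with hKdef
  set S : Set (Amod (m₁ + m₂)) :=
    vext (Fin.castAdd m₂) '' (B₁ : Set (Amod m₁)) ∪
    vext (Fin.natAdd m₁) '' (B₂ : Set (Amod m₂)) with hS
  have hPK : prodIdeal B₁ B₂ ≤ K := prodIdeal_mono (jacExt_le _ _) (jacExt_le _ _)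
  have hSP : S ⊆ (prodIdeal B₁ B₂ : Set (Amod (m₁ + m₂))) := by
    rw [hS]
    intro x hx
    rcases hx with ⟨y, hy, rfl⟩ | ⟨y, hy, rfl⟩
    · exact vextL_mem_prodIdeal hy
    · exact vextR_mem_prodIdeal hy
  -- span representation of each φ i
  have hrep : ∀ i, ∃ c : Amod (m₁ + m₂) →₀ Amod (m₁ + m₂),
      (↑c.support : Set (Amod (m₁ + m₂))) ⊆ S ∧ (c.sum fun g r => r • g) = φ i := by
    intro i
    have := hφ i
    rw [prodIdeal_eq, ← hS] at this
    exact Submodule.mem_span_set.1 this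
  choose cf hcsupp hcsum using hrep
  set π := Ideal.Quotient.mk K with hπ
  rw [← Ideal.Quotient.eq_zero_iff_mem]
  have hπS : ∀ g ∈ S, π g = 0 := by
    intro g hg
    rw [Ideal.Quotient.eq_zero_iff_mem]
    exact hPK (hSP hg)
  have hmapdet : π ((Matrix.of fun i l => pd (J l) (φ i)).det) =
      (π.mapMatrix (Matrix.of fun i l => pd (J l) (φ i))).det := RingHom.map_det π _
  rw [hmapdet]
  -- identify each row of the mapped matrix as a combination of "pure" rows
  have hrowid : ∀ i, (fun l => π (pd (J l) (φ i))) =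
      (fun l => ∑ g ∈ (cf i).support, π (cf i g) • π (pd (J l) g)) := by
    intro i
    funext l
    rw [← hcsum i]
    rw [Finsupp.sum]
    have hpd : pd (J l) (∑ g ∈ (cf i).support, cf i g • g) =
        ∑ g ∈ (cf i).support, pd (J l) (cf i g • g) := by
      exact map_sum (pdHom (J l)) _ _
    rw [hpd, map_sum]
    apply Finset.sum_congr rfl
    intro g hg
    rw [smul_eq_mul, pd_mul, map_add, _root_.map_mul π, _root_.map_mul π,
      hπS g (hcsupp i hg), mul_zero, zero_add, smul_eq_mul]
  -- expand the determinant multilinearly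
  have hdet : (π.mapMatrix (Matrix.of fun i l => pd (J l) (φ i))).det =
      Matrix.detRowAlternating
        (Matrix.of fun i => ∑ g ∈ (cf i).support, π (cf i g) • (fun l => π (pd (J l) g))) := by
    congr 1
    apply Matrix.ext
    intro i l
    have := congrFun (hrowid i) l
    simp only [RingHom.mapMatrix_apply, Matrix.map_apply, Matrix.of_apply] at this ⊢
    rw [this]
    simp only [Finset.sum_apply, Pi.smul_apply]
  rw [hdet]
  have hms := (Matrix.detRowAlternating :
      AlternatingMap (Amod (m₁ + m₂) ⧸ K) (Fin k → (Amod (m₁ + m₂) ⧸ K))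
        (Amod (m₁ + m₂) ⧸ K) (Fin k)).toMultilinearMap.map_sum_finset
    (fun i g => π (cf i g) • (fun l => π (pd (J l) g))) (fun i => (cf i).support)
  rw [show (Matrix.of fun i => ∑ g ∈ (cf i).support, π (cf i g) • (fun l => π (pd (J l) g)))
      = (fun i => ∑ g ∈ (cf i).support, π (cf i g) • (fun l => π (pd (J l) g))) from rfl]
  rw [show Matrix.detRowAlternating
      (fun i => ∑ g ∈ (cf i).support, π (cf i g) • (fun l => π (pd (J l) g)))
      = (Matrix.detRowAlternating).toMultilinearMap
        (fun i => ∑ g ∈ (cf i).support, π (cf i g) • (fun l => π (pd (J l) g))) from rfl]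
  rw [hms]
  apply Finset.sum_eq_zero
  intro r hr
  rw [MultilinearMap.map_smul_univ]
  have hpure : (Matrix.detRowAlternating.toMultilinearMap
      (fun i => (fun l => π (pd (J l) (r i))))) = 0 := by
    have h1 : (fun i => (fun l => π (pd (J l) (r i)))) =
        (π.mapMatrix (Matrix.of fun i l => pd (J l) (r i)) : Matrix (Fin k) (Fin k) _) := rfl
    rw [show (Matrix.detRowAlternating.toMultilinearMap
        (fun i => (fun l => π (pd (J l) (r i)))))
        = (π.mapMatrix (Matrix.of fun i l => pd (J l) (r i))).det from rfl]
    rw [← RingHom.map_det, Ideal.Quotient.eq_zero_iff_mem]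
    apply pure_det_mem B₁ B₂ hk _ _ J hJ
    intro i
    have hri : r i ∈ S := by
      have := Fintype.mem_piFinset.1 hr i
      exact hcsupp i this
    rw [hS] at hri
    rcases hri with ⟨y, hy, hey⟩ | ⟨y, hy, hey⟩
    · exact Or.inl ⟨y, hy, hey.symm⟩
    · exact Or.inr ⟨y, hy, hey.symm⟩
  rw [hpure, smul_zero]

end Reduction
section Converse

open Matrix

variable {m₁ m₂ : ℕ}

lemma finSplit_lt {k k₁ k₂ : ℕ} (h : k = k₁ + k₂) (x : Fin k) (hx : (x : ℕ) < k₁) :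
    finSplit h x = Sum.inl ⟨(x : ℕ), hx⟩ := by
  simp [finSplit, hx]

lemma finSplit_ge {k k₁ k₂ : ℕ} (h : k = k₁ + k₂) (x : Fin k) (hx : ¬ (x : ℕ) < k₁) :
    finSplit h x = Sum.inr ⟨(x : ℕ) - k₁, by omega⟩ := by
  simp [finSplit, hx]

lemma embL_minor_mem (B₁ : Ideal (Amod m₁)) (B₂ : Ideal (Amod m₂))
    (hbig : ¬ (m₁ + m₂ < rankIdeal B₁ + rankIdeal B₂ + 1))
    (φ : Fin (rankIdeal B₁ + 1) → Amod m₁) (hφ : ∀ i, φ i ∈ B₁)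
    (j : Fin (rankIdeal B₁ + 1) → Fin m₁) (hj : StrictMono j) :
    vext (Fin.castAdd m₂) (Matrix.of fun i l => pd (j l) (φ i)).det ∈
      jacExt (rankIdeal B₁ + rankIdeal B₂ + 1) (prodIdeal B₁ B₂) := by
  classical
  obtain ⟨ψ, hψB, hψind⟩ := exists_indep_family B₂
  obtain ⟨c, hcmono, hcdet⟩ := exists_good_cols _ hψind
  have hsplit : rankIdeal B₁ + rankIdeal B₂ + 1 = (rankIdeal B₁ + 1) + rankIdeal B₂ := by omega
  set e := finSplit hsplit with he
  set Φ : Fin (rankIdeal B₁ + rankIdeal B₂ + 1) → Amod (m₁ + m₂) := fun i =>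
    Sum.elim (fun z => vext (Fin.castAdd m₂) (φ z)) (fun z => vext (Fin.natAdd m₁) (ψ z)) (e i)
    with hΦdef
  set Jb : Fin (rankIdeal B₁ + rankIdeal B₂ + 1) → Fin (m₁ + m₂) := fun l =>
    Sum.elim (fun z => Fin.castAdd m₂ (j z)) (fun z => Fin.natAdd m₁ (c z)) (e l) with hJbdef
  have hΦap : ∀ i, Φ i = Sum.elim (fun z => vext (Fin.castAdd m₂) (φ z))
      (fun z => vext (Fin.natAdd m₁) (ψ z)) (e i) := fun _ => rfl
  have hJap : ∀ l, Jb l = Sum.elim (fun z => Fin.castAdd m₂ (j z))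
      (fun z => Fin.natAdd m₁ (c z)) (e l) := fun _ => rfl
  have hΦ : ∀ i, Φ i ∈ prodIdeal B₁ B₂ := by
    intro i
    rw [hΦap i]
    rcases hei : e i with z | z
    · exact vextL_mem_prodIdeal (hφ z)
    · exact vextR_mem_prodIdeal (hψB z)
  have hJbmono : StrictMono Jb := by
    intro a b hab
    have habv : (a : ℕ) < (b : ℕ) := hab
    rw [hJap a, hJap b]
    by_cases ha : (a : ℕ) < rankIdeal B₁ + 1 <;> by_cases hb : (b : ℕ) < rankIdeal B₁ + 1
    · rw [he, finSplit_lt hsplit a ha, finSplit_lt hsplit b hb]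
      simp only [Sum.elim_inl]
      have hlt := hj (show (⟨(a : ℕ), ha⟩ : Fin (rankIdeal B₁ + 1)) < ⟨(b : ℕ), hb⟩
        from Fin.mk_lt_mk.2 habv)
      rw [Fin.lt_def] at hlt ⊢
      simpa using hlt
    · rw [he, finSplit_lt hsplit a ha, finSplit_ge hsplit b hb]
      simp only [Sum.elim_inl, Sum.elim_inr]
      rw [Fin.lt_def]
      have h1 : ((j ⟨(a : ℕ), ha⟩ : Fin m₁) : ℕ) < m₁ := (j _).2
      simp only [Fin.coe_castAdd, Fin.coe_natAdd]
      omega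
    · omega
    · rw [he, finSplit_ge hsplit a ha, finSplit_ge hsplit b hb]
      simp only [Sum.elim_inr]
      have hlt := hcmono (show (⟨(a : ℕ) - (rankIdeal B₁ + 1), by omega⟩ : Fin (rankIdeal B₂)) <
          ⟨(b : ℕ) - (rankIdeal B₁ + 1), by omega⟩ from Fin.mk_lt_mk.2 (by omega))
      rw [Fin.lt_def] at hlt ⊢
      simp only [Fin.coe_natAdd] at hlt ⊢
      omega
  set M' : Matrix (Fin (rankIdeal B₁ + rankIdeal B₂ + 1))
      (Fin (rankIdeal B₁ + rankIdeal B₂ + 1)) (Amod (m₁ + m₂)) :=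
    Matrix.of fun i l => pd (Jb l) (Φ i) with hM'
  have hM'mem : M'.det ∈ jacExt (rankIdeal B₁ + rankIdeal B₂ + 1) (prodIdeal B₁ B₂) := by
    rw [jacExt, if_neg hbig]
    apply Ideal.mem_sup_right
    apply Ideal.subset_span
    exact ⟨Φ, hΦ, Jb, hJbmono, rfl⟩
  set A : Matrix (Fin (rankIdeal B₁ + 1)) (Fin (rankIdeal B₁ + 1)) (Amod m₁) :=
    Matrix.of fun i l => pd (j l) (φ i) with hA
  set D : Matrix (Fin (rankIdeal B₂)) (Fin (rankIdeal B₂)) (Amod m₂) :=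
    Matrix.of fun i l => pd (c l) (ψ i) with hD
  have hblock : M'.submatrix e.symm e.symm =
      Matrix.fromBlocks (A.map (vext (Fin.castAdd m₂))) 0 0 (D.map (vext (Fin.natAdd m₁))) := by
    apply Matrix.ext
    intro i l
    rcases i with z | z <;> rcases l with w | w <;>
      simp only [hM', hA, hD, Matrix.submatrix_apply, Matrix.of_apply, hΦap, hJap,
        Equiv.apply_symm_apply, Sum.elim_inl, Sum.elim_inr,
        Matrix.fromBlocks_apply₁₁, Matrix.fromBlocks_apply₁₂,
        Matrix.fromBlocks_apply₂₁, Matrix.fromBlocks_apply₂₂,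
        Matrix.map_apply, Matrix.zero_apply]
    · exact pd_vext castAdd_inj _ _
    · exact pd_vext_zero _ (by rw [mem_range_castAdd]; simp only [Fin.coe_natAdd]; omega)
    · exact pd_vext_zero _
        (by rw [mem_range_natAdd]; simp only [Fin.coe_castAdd]; exact not_le.2 (Fin.is_lt _))
    · exact pd_vext natAdd_inj _ _
  have hdetfact : M'.det = vext (Fin.castAdd m₂) A.det * vext (Fin.natAdd m₁) D.det := by
    rw [← Matrix.det_submatrix_equiv_self e.symm M', hblock, Matrix.det_fromBlocks_zero₂₁]
    congr 1
    · rw [show A.map (vext (Fin.castAdd m₂)) = (vextHom castAdd_inj).mapMatrix A from rfl,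
        ← RingHom.map_det]
      rfl
    · rw [show D.map (vext (Fin.natAdd m₁)) = (vextHom natAdd_inj).mapMatrix D from rfl,
        ← RingHom.map_det]
      rfl
  have hDunit : IsUnit (vext (Fin.natAdd m₁) D.det) := by
    rw [MvPowerSeries.isUnit_iff_constantCoeff, constantCoeff_vext natAdd_inj]
    have h1 : (MvPowerSeries.constantCoeff (σ := Fin m₂) (R := ℂ)) D.det =
        (((MvPowerSeries.constantCoeff (σ := Fin m₂) (R := ℂ))).mapMatrix D).det :=
      RingHom.map_det _ _
    rw [h1]
    have h2 : (((MvPowerSeries.constantCoeff (σ := Fin m₂) (R := ℂ))).mapMatrix D) =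
        Matrix.of fun i l => diffAtZero (ψ i) (c l) := by
      apply Matrix.ext
      intro i l
      show (MvPowerSeries.constantCoeff (σ := Fin m₂) (R := ℂ)) (pd (c l) (ψ i)) = _
      rw [constantCoeff_pd]
      rfl
    rw [h2, isUnit_iff_ne_zero]
    exact hcdet
  obtain ⟨w, hw⟩ := hDunit
  have hfin : vext (Fin.castAdd m₂) A.det = M'.det * ↑w⁻¹ := by
    rw [hdetfact, ← hw, Units.mul_inv_cancel_right]
  rw [hfin]
  exact Ideal.mul_mem_right _ _ hM'mem

lemma embR_minor_mem (B₁ : Ideal (Amod m₁)) (B₂ : Ideal (Amod m₂))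
    (hbig : ¬ (m₁ + m₂ < rankIdeal B₁ + rankIdeal B₂ + 1))
    (ψ : Fin (rankIdeal B₂ + 1) → Amod m₂) (hψ : ∀ i, ψ i ∈ B₂)
    (j : Fin (rankIdeal B₂ + 1) → Fin m₂) (hj : StrictMono j) :
    vext (Fin.natAdd m₁) (Matrix.of fun i l => pd (j l) (ψ i)).det ∈
      jacExt (rankIdeal B₁ + rankIdeal B₂ + 1) (prodIdeal B₁ B₂) := by
  classical
  obtain ⟨φ, hφB, hφind⟩ := exists_indep_family B₁
  obtain ⟨c, hcmono, hcdet⟩ := exists_good_cols _ hφind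
  have hsplit : rankIdeal B₁ + rankIdeal B₂ + 1 = rankIdeal B₁ + (rankIdeal B₂ + 1) := by omega
  set e := finSplit hsplit with he
  set Φ : Fin (rankIdeal B₁ + rankIdeal B₂ + 1) → Amod (m₁ + m₂) := fun i =>
    Sum.elim (fun z => vext (Fin.castAdd m₂) (φ z)) (fun z => vext (Fin.natAdd m₁) (ψ z)) (e i)
    with hΦdef
  set Jb : Fin (rankIdeal B₁ + rankIdeal B₂ + 1) → Fin (m₁ + m₂) := fun l =>
    Sum.elim (fun z => Fin.castAdd m₂ (c z)) (fun z => Fin.natAdd m₁ (j z)) (e l) with hJbdef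
  have hΦap : ∀ i, Φ i = Sum.elim (fun z => vext (Fin.castAdd m₂) (φ z))
      (fun z => vext (Fin.natAdd m₁) (ψ z)) (e i) := fun _ => rfl
  have hJap : ∀ l, Jb l = Sum.elim (fun z => Fin.castAdd m₂ (c z))
      (fun z => Fin.natAdd m₁ (j z)) (e l) := fun _ => rfl
  have hΦ : ∀ i, Φ i ∈ prodIdeal B₁ B₂ := by
    intro i
    rw [hΦap i]
    rcases hei : e i with z | z
    · exact vextL_mem_prodIdeal (hφB z)
    · exact vextR_mem_prodIdeal (hψ z)
  have hJbmono : StrictMono Jb := by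
    intro a b hab
    have habv : (a : ℕ) < (b : ℕ) := hab
    rw [hJap a, hJap b]
    by_cases ha : (a : ℕ) < rankIdeal B₁ <;> by_cases hb : (b : ℕ) < rankIdeal B₁
    · rw [he, finSplit_lt hsplit a ha, finSplit_lt hsplit b hb]
      simp only [Sum.elim_inl]
      have hlt := hcmono (show (⟨(a : ℕ), ha⟩ : Fin (rankIdeal B₁)) < ⟨(b : ℕ), hb⟩
        from Fin.mk_lt_mk.2 habv)
      rw [Fin.lt_def] at hlt ⊢
      simpa using hlt
    · rw [he, finSplit_lt hsplit a ha, finSplit_ge hsplit b hb]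
      simp only [Sum.elim_inl, Sum.elim_inr]
      rw [Fin.lt_def]
      have h1 : ((c ⟨(a : ℕ), ha⟩ : Fin m₁) : ℕ) < m₁ := (c _).2
      simp only [Fin.coe_castAdd, Fin.coe_natAdd]
      omega
    · omega
    · rw [he, finSplit_ge hsplit a ha, finSplit_ge hsplit b hb]
      simp only [Sum.elim_inr]
      have hlt := hj (show (⟨(a : ℕ) - rankIdeal B₁, by omega⟩ : Fin (rankIdeal B₂ + 1)) <
          ⟨(b : ℕ) - rankIdeal B₁, by omega⟩ from Fin.mk_lt_mk.2 (by omega))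
      rw [Fin.lt_def] at hlt ⊢
      simp only [Fin.coe_natAdd] at hlt ⊢
      omega
  set M' : Matrix (Fin (rankIdeal B₁ + rankIdeal B₂ + 1))
      (Fin (rankIdeal B₁ + rankIdeal B₂ + 1)) (Amod (m₁ + m₂)) :=
    Matrix.of fun i l => pd (Jb l) (Φ i) with hM'
  have hM'mem : M'.det ∈ jacExt (rankIdeal B₁ + rankIdeal B₂ + 1) (prodIdeal B₁ B₂) := by
    rw [jacExt, if_neg hbig]
    apply Ideal.mem_sup_right
    apply Ideal.subset_span
    exact ⟨Φ, hΦ, Jb, hJbmono, rfl⟩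
  set A : Matrix (Fin (rankIdeal B₁)) (Fin (rankIdeal B₁)) (Amod m₁) :=
    Matrix.of fun i l => pd (c l) (φ i) with hA
  set D : Matrix (Fin (rankIdeal B₂ + 1)) (Fin (rankIdeal B₂ + 1)) (Amod m₂) :=
    Matrix.of fun i l => pd (j l) (ψ i) with hD
  have hblock : M'.submatrix e.symm e.symm =
      Matrix.fromBlocks (A.map (vext (Fin.castAdd m₂))) 0 0 (D.map (vext (Fin.natAdd m₁))) := by
    apply Matrix.ext
    intro i l
    rcases i with z | z <;> rcases l with w | w <;>
      simp only [hM', hA, hD, Matrix.submatrix_apply, Matrix.of_apply, hΦap, hJap,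
        Equiv.apply_symm_apply, Sum.elim_inl, Sum.elim_inr,
        Matrix.fromBlocks_apply₁₁, Matrix.fromBlocks_apply₁₂,
        Matrix.fromBlocks_apply₂₁, Matrix.fromBlocks_apply₂₂,
        Matrix.map_apply, Matrix.zero_apply]
    · exact pd_vext castAdd_inj _ _
    · exact pd_vext_zero _ (by rw [mem_range_castAdd]; simp only [Fin.coe_natAdd]; omega)
    · exact pd_vext_zero _
        (by rw [mem_range_natAdd]; simp only [Fin.coe_castAdd]; exact not_le.2 (Fin.is_lt _))
    · exact pd_vext natAdd_inj _ _
  have hdetfact : M'.det = vext (Fin.castAdd m₂) A.det * vext (Fin.natAdd m₁) D.det := by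
    rw [← Matrix.det_submatrix_equiv_self e.symm M', hblock, Matrix.det_fromBlocks_zero₂₁]
    congr 1
    · rw [show A.map (vext (Fin.castAdd m₂)) = (vextHom castAdd_inj).mapMatrix A from rfl,
        ← RingHom.map_det]
      rfl
    · rw [show D.map (vext (Fin.natAdd m₁)) = (vextHom natAdd_inj).mapMatrix D from rfl,
        ← RingHom.map_det]
      rfl
  have hAunit : IsUnit (vext (Fin.castAdd m₂) A.det) := by
    rw [MvPowerSeries.isUnit_iff_constantCoeff, constantCoeff_vext castAdd_inj]
    have h1 : (MvPowerSeries.constantCoeff (σ := Fin m₁) (R := ℂ)) A.det =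
        (((MvPowerSeries.constantCoeff (σ := Fin m₁) (R := ℂ))).mapMatrix A).det :=
      RingHom.map_det _ _
    rw [h1]
    have h2 : (((MvPowerSeries.constantCoeff (σ := Fin m₁) (R := ℂ))).mapMatrix A) =
        Matrix.of fun i l => diffAtZero (φ i) (c l) := by
      apply Matrix.ext
      intro i l
      show (MvPowerSeries.constantCoeff (σ := Fin m₁) (R := ℂ)) (pd (c l) (φ i)) = _
      rw [constantCoeff_pd]
      rfl
    rw [h2, isUnit_iff_ne_zero]
    exact hcdet
  obtain ⟨w, hw⟩ := hAunit
  have hfin : vext (Fin.natAdd m₁) D.det = ↑w⁻¹ * M'.det := by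
    rw [hdetfact, ← hw, Units.inv_mul_cancel_left]
  rw [hfin]
  exact Ideal.mul_mem_left _ _ hM'mem

lemma key_step (B₁ : Ideal (Amod m₁)) (B₂ : Ideal (Amod m₂)) :
    jacExtUpper (corankIdeal B₁ + corankIdeal B₂) (prodIdeal B₁ B₂) =
      prodIdeal (jacExtUpper (corankIdeal B₁) B₁) (jacExtUpper (corankIdeal B₂) B₂) := by
  have h₁ := rankIdeal_le B₁
  have h₂ := rankIdeal_le B₂
  have e₁ : m₁ - corankIdeal B₁ + 1 = rankIdeal B₁ + 1 := by rw [corankIdeal]; omega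
  have e₂ : m₂ - corankIdeal B₂ + 1 = rankIdeal B₂ + 1 := by rw [corankIdeal]; omega
  have e0 : (m₁ + m₂) - (corankIdeal B₁ + corankIdeal B₂) + 1 =
      rankIdeal B₁ + rankIdeal B₂ + 1 := by
    rw [corankIdeal, corankIdeal]; omega
  rw [jacExtUpper, jacExtUpper, jacExtUpper, e0, e₁, e₂]
  by_cases hbig : m₁ + m₂ < rankIdeal B₁ + rankIdeal B₂ + 1
  · have hb1 : m₁ < rankIdeal B₁ + 1 := by omega
    have hb2 : m₂ < rankIdeal B₂ + 1 := by omega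
    rw [jacExt, if_pos hbig, jacExt, if_pos hb1, jacExt, if_pos hb2]
  · apply le_antisymm
    · conv_lhs => rw [jacExt, if_neg hbig]
      apply sup_le
      · exact prodIdeal_mono (jacExt_le _ _) (jacExt_le _ _)
      · rw [Ideal.span_le]
        rintro f ⟨φ, hφ, J, hJ, rfl⟩
        exact gen_det_mem B₁ B₂ rfl φ hφ J hJ.injective
    · rw [prodIdeal_eq, Ideal.span_le]
      rintro f (⟨x, hx, rfl⟩ | ⟨y, hy, rfl⟩)
      · have hle : jacExt (rankIdeal B₁ + 1) B₁ ≤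
            Ideal.comap (vextHom (castAdd_inj (m₁ := m₁) (m₂ := m₂)))
              (jacExt (rankIdeal B₁ + rankIdeal B₂ + 1) (prodIdeal B₁ B₂)) := by
          conv_lhs => rw [jacExt]
          split_ifs with hm
          · intro b hb
            rw [Ideal.mem_comap]
            exact jacExt_le _ _ (vextL_mem_prodIdeal hb)
          · apply sup_le
            · intro b hb
              rw [Ideal.mem_comap]
              exact jacExt_le _ _ (vextL_mem_prodIdeal hb)
            · rw [Ideal.span_le]
              rintro f2 ⟨φ2, hφ2, jj, hjj, rfl⟩
              rw [SetLike.mem_coe, Ideal.mem_comap]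
              exact embL_minor_mem B₁ B₂ hbig φ2 hφ2 jj hjj
        have hmem := hle hx
        rw [Ideal.mem_comap] at hmem
        exact hmem
      · have hle : jacExt (rankIdeal B₂ + 1) B₂ ≤
            Ideal.comap (vextHom (natAdd_inj (m₁ := m₁) (m₂ := m₂)))
              (jacExt (rankIdeal B₁ + rankIdeal B₂ + 1) (prodIdeal B₁ B₂)) := by
          conv_lhs => rw [jacExt]
          split_ifs with hm
          · intro b hb
            rw [Ideal.mem_comap]
            exact jacExt_le _ _ (vextR_mem_prodIdeal hb)
          · apply sup_le
            · intro b hb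
              rw [Ideal.mem_comap]
              exact jacExt_le _ _ (vextR_mem_prodIdeal hb)
            · rw [Ideal.span_le]
              rintro f2 ⟨ψ2, hψ2, jj, hjj, rfl⟩
              rw [SetLike.mem_coe, Ideal.mem_comap]
              exact embR_minor_mem B₁ B₂ hbig ψ2 hψ2 jj hjj
        have hmem := hle hy
        rw [Ideal.mem_comap] at hmem
        exact hmem

end Converse

/-- **Iterated critical extensions of a product ideal split.** Let `J₁ ⊆ 𝒜 m₁`, `J₂ ⊆ 𝒜 m₂`
be proper ideals with Thom–Boardman symbols `s^{(1)}`, `s^{(2)}`, and let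
`s_q = s_q^{(1)} + s_q^{(2)}`. Then for every `p`,
`Δ^{s_p} ⋯ Δ^{s_1}(J₁ ⊞ J₂) = (Δ^{s_p^{(1)}} ⋯ Δ^{s_1^{(1)}} J₁) ⊞ (Δ^{s_p^{(2)}} ⋯ Δ^{s_1^{(2)}} J₂)`
in `𝒜 (m₁+m₂)`. -/
theorem iterExt_prodIdeal (m₁ m₂ : ℕ) (J₁ : Ideal (Amod m₁)) (J₂ : Ideal (Amod m₂))
    (h₁ : J₁ ≠ ⊤) (h₂ : J₂ ≠ ⊤) :
    ∀ p : ℕ, iterExt (prodIdeal J₁ J₂) (fun q => TB J₁ q + TB J₂ q) p =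
      prodIdeal (TBiter J₁ p) (TBiter J₂ p) := by
  intro p
  induction p with
  | zero => rfl
  | succ p ih =>
    show jacExtUpper (TB J₁ p + TB J₂ p)
        (iterExt (prodIdeal J₁ J₂) (fun q => TB J₁ q + TB J₂ q) p) =
      prodIdeal (jacExtUpper (corankIdeal (TBiter J₁ p)) (TBiter J₁ p))
        (jacExtUpper (corankIdeal (TBiter J₂ p)) (TBiter J₂ p))
    rw [ih]
    exact key_step (TBiter J₁ p) (TBiter J₂ p)
end
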